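/- Let q be a regular critical weight sequence, μ = μ^q, and let m_1 be the mean of μ_1. There exists a constant β_0 > 0 such that for every sufficiently large n, P_μ( |#∂_0 T − m_1 μ_0(0) n| > n^{3/4} and #T¹ = n ) ≤ exp(−n^{β_0}), where ∂_0 T = {u ∈ T⁰ : k_u(T) = 0} is the set of type-0 leaves of T. -/

import Mathlib

open MeasureTheory Filter Topology
open scoped Classical

noncomputable section

namespace PaperWeill

/-! ### Plane trees, coded as finite sets of words over `ℕ = {1,2,…}` -/

/-- The number of children `k_u(T)` of the vertex `u` in the finite set of words `T`. -/
def childCount (T : Finset (List ℕ)) (u : List ℕ) : ℕ :=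
  (T.filter fun v => v ≠ [] ∧ v.dropLast = u).card

/-- `T` is a plane tree: it contains the root, is stable under taking fathers, uses only
letters `≥ 1`, and the children of `u` are exactly `u1, …, u k_u(T)`. -/
def IsPlaneTree (T : Finset (List ℕ)) : Prop :=
  [] ∈ T ∧ (∀ (u : List ℕ) (j : ℕ), u ++ [j] ∈ T → u ∈ T) ∧
    (∀ v ∈ T, ∀ i ∈ v, 1 ≤ i) ∧
    ∀ u ∈ T, ∀ j : ℕ, (u ++ [j] ∈ T ↔ 1 ≤ j ∧ j ≤ childCount T u)

/-- Vertices of type 0 (even generation). -/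
def type0 (T : Finset (List ℕ)) : Finset (List ℕ) := T.filter fun v => Even v.length

/-- Vertices of type 1 (odd generation). -/
def type1 (T : Finset (List ℕ)) : Finset (List ℕ) := T.filter fun v => ¬ Even v.length

/-- `#T¹`. -/
def t1card (T : Finset (List ℕ)) : ℕ := (type1 T).card

/-- The `P_μ`-weight of an individual plane tree. -/
def treeWt (μ₀ μ₁ : ℕ → ℝ) (T : Finset (List ℕ)) : ℝ :=
  ∏ u ∈ T, if Even u.length then μ₀ (childCount T u) else μ₁ (childCount T u)

/-- `P_μ(E)`, the probability of an event `E` under the two-type Galton-Watson law. -/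
def tP (μ₀ μ₁ : ℕ → ℝ) (E : Finset (List ℕ) → Prop) : ℝ :=
  ∑' T : Finset (List ℕ), if IsPlaneTree T ∧ E T then treeWt μ₀ μ₁ T else 0

/-- conditional probability `P_μ(E ∣ F)`. -/
def tCond (μ₀ μ₁ : ℕ → ℝ) (E F : Finset (List ℕ) → Prop) : ℝ :=
  tP μ₀ μ₁ (fun T => E T ∧ F T) / tP μ₀ μ₁ F

/-! ### Regular critical weight sequences -/

/-- `N(k) = C(2k-1, k-1)`. -/
def Ncoef (k : ℕ) : ℕ := (2 * k - 1).choose (k - 1)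

/-- `f_q(x) = Σ_k N(k+1) q_{k+1} x^k`. -/
def fq (q : ℕ → ℝ) (x : ℝ) : ℝ := ∑' k : ℕ, (Ncoef (k + 1) : ℝ) * q (k + 1) * x ^ k

/-- The derivative series `f_q'(x) = Σ_k k N(k+1) q_{k+1} x^{k-1}`. -/
def fq' (q : ℕ → ℝ) (x : ℝ) : ℝ :=
  ∑' k : ℕ, (k : ℝ) * (Ncoef (k + 1) : ℝ) * q (k + 1) * x ^ (k - 1)

/-- `q` is a regular critical weight sequence with distinguished solution `Z = Z_q`. -/
structure RegCrit (q : ℕ → ℝ) (Z : ℝ) : Prop where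
  nonneg : ∀ i, 0 ≤ q i
  some_pos : ∃ i, 2 ≤ i ∧ 0 < q i
  Zpos : 0 < Z
  fixedPoint : fq q Z = 1 - 1 / Z
  critical : Z ^ 2 * fq' q Z = 1
  regular : ∃ R, Z < R ∧ Summable fun k : ℕ => (Ncoef (k + 1) : ℝ) * q (k + 1) * R ^ k

/-- `μ₀^q`, the geometric distribution with parameter `f_q(Z_q)`. -/
def mu0 (q : ℕ → ℝ) (Z : ℝ) (k : ℕ) : ℝ := Z⁻¹ * fq q Z ^ k

/-- `μ₁^q(k) = Z^k N(k+1) q_{k+1} / f_q(Z)`. -/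
def mu1 (q : ℕ → ℝ) (Z : ℝ) (k : ℕ) : ℝ := Z ^ k * (Ncoef (k + 1) : ℝ) * q (k + 1) / fq q Z

/-- The mean `m₁` of `μ₁^q`. -/
def meanMu1 (q : ℕ → ℝ) (Z : ℝ) : ℝ := ∑' k : ℕ, (k : ℝ) * mu1 q Z k

/-! ### Spatial trees -/

/-- `(x_1,…,x_k) ∈ A_k`. -/
def vecInA (k : ℕ) (x : ℕ → ℤ) : Prop :=
  1 ≤ k → (-1 ≤ x 1 ∧ x k ≤ 1 ∧ ∀ j : ℕ, 1 ≤ j → j < k → -1 ≤ x (j + 1) - x j)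

/-- Admissibility of the displacement field `D` on the tree `T` (`D v = U_v - U_{v̌}`):
children of type-0 vertices get displacement `0` (the Dirac mass `ν₀`), and around each
type-1 vertex the displacement vector lies in `A_k` (uniform law `ν₁^k`), or in its
reversal if `rev = true` (law `ν̃₁^k`). -/
def dispOK (rev : Bool) (T : Finset (List ℕ)) (D : List ℕ →₀ ℤ) : Prop :=
  (∀ v : List ℕ, D v ≠ 0 → v ∈ T ∧ v ≠ [] ∧ ¬ Even v.dropLast.length) ∧
    ∀ u ∈ T, ¬ Even u.length →
      vecInA (childCount T u)
        fun j => if rev then D (u ++ [childCount T u + 1 - j]) else D (u ++ [j])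

/-- The `ℙ_{μ,ν,x}`-weight of an individual spatial tree `(T, D)`. -/
def spatialWt (μ₀ μ₁ : ℕ → ℝ) (rev : Bool) (T : Finset (List ℕ)) (D : List ℕ →₀ ℤ) : ℝ :=
  if IsPlaneTree T ∧ dispOK rev T D then
    treeWt μ₀ μ₁ T * ∏ u ∈ type1 T, ((Ncoef (childCount T u + 1) : ℝ))⁻¹
  else 0

/-- The label function determined by the initial value `x` and the displacements `D`. -/
def labelOf (x : ℝ) (D : List ℕ →₀ ℤ) (v : List ℕ) : ℝ :=
  x + ∑ i ∈ Finset.range v.length, ((D (v.take (i + 1)) : ℤ) : ℝ)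

/-- Expectation `𝔼_{μ,ν,x}[F(T,U)]` (with `ν̃` in place of `ν` if `rev = true`). -/
def sE (μ₀ μ₁ : ℕ → ℝ) (rev : Bool) (x : ℝ)
    (F : Finset (List ℕ) → (List ℕ → ℝ) → ℝ) : ℝ :=
  ∑' p : Finset (List ℕ) × (List ℕ →₀ ℤ),
    F p.1 (labelOf x p.2) * spatialWt μ₀ μ₁ rev p.1 p.2

/-- `ℙ_{μ,ν,x}(E)`. -/
def sP (μ₀ μ₁ : ℕ → ℝ) (rev : Bool) (x : ℝ)
    (E : Finset (List ℕ) → (List ℕ → ℝ) → Prop) : ℝ :=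
  sE μ₀ μ₁ rev x fun T U => if E T U then 1 else 0

/-- Conditional expectation `𝔼_{μ,ν,x}[F ∣ G]`. -/
def sCondE (μ₀ μ₁ : ℕ → ℝ) (rev : Bool) (x : ℝ)
    (F : Finset (List ℕ) → (List ℕ → ℝ) → ℝ)
    (G : Finset (List ℕ) → (List ℕ → ℝ) → Prop) : ℝ :=
  sE μ₀ μ₁ rev x (fun T U => if G T U then F T U else 0) / sP μ₀ μ₁ rev x G

/-- Conditional probability `ℙ_{μ,ν,x}(E ∣ G)`. -/
def sCondP (μ₀ μ₁ : ℕ → ℝ) (rev : Bool) (x : ℝ)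
    (E G : Finset (List ℕ) → (List ℕ → ℝ) → Prop) : ℝ :=
  sP μ₀ μ₁ rev x (fun T U => E T U ∧ G T U) / sP μ₀ μ₁ rev x G

/-! ### Distinguished vertices -/

/-- `∂₀T`, the type-0 leaves of `T`. -/
def leaves0 (T : Finset (List ℕ)) : Finset (List ℕ) :=
  T.filter fun v => Even v.length ∧ childCount T v = 0

/-- `min{U_w : w ∈ T}`. -/
def minLabel (T : Finset (List ℕ)) (U : List ℕ → ℝ) : ℝ := sInf (U '' ↑T)

/-- `Δ₀`, the set of type-0 vertices with minimal label. -/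
def Delta0 (T : Finset (List ℕ)) (U : List ℕ → ℝ) : Finset (List ℕ) :=
  T.filter fun v => Even v.length ∧ U v = minLabel T U

/-- Strict lexicographical order on words. -/
def lexLt (u v : List ℕ) : Prop := List.Lex (· < ·) u v

/-- `v` is the first element of `Δ₀` in lexicographical order. -/
def IsFirstMin (T : Finset (List ℕ)) (U : List ℕ → ℝ) (v : List ℕ) : Prop :=
  v ∈ Delta0 T U ∧ ∀ w ∈ Delta0 T U, w ≠ v → lexLt v w

/-- `v_m`, the first element of `Δ₀` in lexicographical order. -/
def vmin (T : Finset (List ℕ)) (U : List ℕ → ℝ) : List ℕ :=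
  if h : ∃ v, IsFirstMin T U v then h.choose else []

/-- `U̲ > 0` : all labels of type-0 vertices other than the root are positive
(vacuously true if there are none, following the convention `min ∅ = ∞`). -/
def UnderbarPos (T : Finset (List ℕ)) (U : List ℕ → ℝ) : Prop :=
  ∀ v ∈ T, v ≠ [] → Even v.length → 0 < U v

/-- `U̲ ≥ 0`. -/
def UnderbarNonneg (T : Finset (List ℕ)) (U : List ℕ → ℝ) : Prop :=
  ∀ v ∈ T, v ≠ [] → Even v.length → 0 ≤ U v

/-! ### Contour function and re-rooting -/

/-- One step of the contour walk: from `cur`, having arrived from `prev`. -/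
def cnext (T : Finset (List ℕ)) (prev cur : List ℕ) : List ℕ :=
  if prev.length = cur.length + 1 then
    if prev.getLastD 0 < childCount T cur then cur ++ [prev.getLastD 0 + 1] else cur.dropLast
  else if 1 ≤ childCount T cur then cur ++ [1] else cur.dropLast

/-- The search-depth sequence `u_0, u_1, …, u_{2ζ}` of `T`. -/
def contourSeq (T : Finset (List ℕ)) : List (List ℕ) :=
  ((List.range (2 * T.card - 2)).foldl
    (fun acc _ => cnext T (acc.tail.headD (acc.headD [])) (acc.headD []) :: acc) [[]]).reverse

/-- The contour function of `T` at integer times. -/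
def contourHt (T : Finset (List ℕ)) (i : ℕ) : ℤ := (((contourSeq T).getD i []).length : ℤ)

/-- `[[k - t]]`, the representative modulo `2ζ` in `[0, 2ζ)`, where `k` is the time of the
first visit of `v₀`. -/
def wrapIdx (T : Finset (List ℕ)) (v₀ : List ℕ) (t : ℕ) : ℕ :=
  ((((contourSeq T).idxOf v₀ : ℤ) - (t : ℤ)) % (((contourSeq T).length : ℤ) - 1)).toNat

/-- The re-rooted contour function
`Ĉ^{(v₀)}(t) = C(k) + C([[k-t]]) - 2 inf_{s} C(s)`. -/
def Chat (T : Finset (List ℕ)) (v₀ : List ℕ) (t : ℕ) : ℤ :=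
  let k := (contourSeq T).idxOf v₀
  let m := wrapIdx T v₀ t
  contourHt T k + contourHt T m -
    2 * (Finset.Icc (min k m) (max k m)).inf' (Finset.nonempty_Icc.mpr min_le_max) (contourHt T)

/-- `2ζ - (l - k)`, the length of the time interval of the re-rooted contour. -/
def rerootLen (T : Finset (List ℕ)) (v₀ : List ℕ) : ℕ :=
  let cs := contourSeq T
  (cs.length - 1) - ((cs.length - 1 - cs.reverse.idxOf v₀) - cs.idxOf v₀)

/-- The successive heights `Ĉ^{(v₀)}(1), …, Ĉ^{(v₀)}(2ζ - (l-k))` of the re-rooted contour. -/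
def rerootHeights (T : Finset (List ℕ)) (v₀ : List ℕ) : List ℕ :=
  (List.range (rerootLen T v₀)).map fun t => (Chat T v₀ (t + 1)).toNat

/-- One step of the reconstruction of a plane tree from the list of heights of its contour
function; the state is (current vertex, vertices built so far, visit sequence so far). -/
def buildStep (st : List ℕ × Finset (List ℕ) × List (List ℕ)) (h : ℕ) :
    List ℕ × Finset (List ℕ) × List (List ℕ) :=
  if h = st.1.length + 1 then
    (st.1 ++ [childCount st.2.1 st.1 + 1],
      insert (st.1 ++ [childCount st.2.1 st.1 + 1]) st.2.1,
      st.2.2 ++ [st.1 ++ [childCount st.2.1 st.1 + 1]])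
  else (st.1.dropLast, st.2.1, st.2.2 ++ [st.1.dropLast])

/-- The re-rooted tree `T̂^{(v₀)}`: the unique plane tree whose contour function is
`Ĉ^{(v₀)}`, reconstructed from its list of heights. -/
def reroot (T : Finset (List ℕ)) (v₀ : List ℕ) : Finset (List ℕ) :=
  ((rerootHeights T v₀).foldl buildStep ([], {[]}, [[]])).2.1

/-- The search-depth sequence of the re-rooted tree `T̂^{(v₀)}`. -/
def rerootVisits (T : Finset (List ℕ)) (v₀ : List ℕ) : List (List ℕ) :=
  ((rerootHeights T v₀).foldl buildStep ([], {[]}, [[]])).2.2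

/-- The re-rooted labels `Û^{(v₀)}` : for `v` of type 0, `Û^{(v₀)}_v = U_{v̄} - U_{v₀}` where
`v̄` is the vertex of `T` corresponding to `v`, and `Û^{(v₀)}_v = Û^{(v₀)}_{v̌}` for `v` of
type 1. -/
def rerootLabel (T : Finset (List ℕ)) (U : List ℕ → ℝ) (v₀ v : List ℕ) : ℝ :=
  let w := if Even v.length then v else v.dropLast
  U ((contourSeq T).getD (wrapIdx T v₀ ((rerootVisits T v₀).idxOf w)) []) - U v₀

/-- `T^{(w₀)}`, the tree `T` with the strict descendants of `w₀` removed. -/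
def truncateAt (T : Finset (List ℕ)) (w₀ : List ℕ) : Finset (List ℕ) :=
  T.filter fun v => ¬(w₀ <+: v ∧ v ≠ w₀)

/-! ### The processes `J` and `K` -/

/-- `J_T(n)`, the number of type-0 vertices among the `n+1` lexicographically first
vertices of `T`. -/
def Jfun (T : Finset (List ℕ)) (n : ℕ) : ℕ :=
  (T.filter fun v => Even v.length ∧ (T.filter fun w => lexLt w v).card ≤ n).card

/-- `J̄_T(t) = J_T(ζ t) / #T⁰`. -/
def Jbar (T : Finset (List ℕ)) (t : ℝ) : ℝ :=
  (Jfun T ⌊((T.card - 1 : ℕ) : ℝ) * t⌋₊ : ℝ) / ((type0 T).card : ℝ)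

/-- The contour function at integer times, with values in `ℕ`. -/
def Cfn (T : Finset (List ℕ)) (l : ℕ) : ℕ := ((contourSeq T).getD l []).length

/-- `K_T(k) = 1 + #{l ∈ {1,…,k} : C(l) = max_{[l-1,l]} C and C(l) even}`. -/
def Kfun (T : Finset (List ℕ)) (k : ℕ) : ℕ :=
  1 + ((Finset.Icc 1 k).filter fun l => Cfn T (l - 1) ≤ Cfn T l ∧ Even (Cfn T l)).card

/-- `K̄_T(t) = K_T(2ζ t) / #T⁰`. -/
def Kbar (T : Finset (List ℕ)) (t : ℝ) : ℝ :=
  (Kfun T ⌊((2 * (T.card - 1) : ℕ) : ℝ) * t⌋₊ : ℝ) / ((type0 T).card : ℝ)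



open scoped ENNReal


/-! ### Auxiliary: subtree decomposition of plane trees -/

/-- The subtree of `T` above the child `j` of the root. -/
def subt (j : ℕ) (T : Finset (List ℕ)) : Finset (List ℕ) :=
  (T.filter fun v => v.head? = some j).image List.tail

lemma mem_subt {T : Finset (List ℕ)} {j : ℕ} {w : List ℕ} :
    w ∈ subt j T ↔ j :: w ∈ T := by
  simp only [subt, Finset.mem_image, Finset.mem_filter]
  constructor
  · rintro ⟨v, ⟨hv, hh⟩, rfl⟩
    cases v with
    | nil => simp at hh
    | cons a t => simp only [List.head?_cons, Option.some.injEq] at hh; subst hh; exact hv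
  · intro h; exact ⟨j :: w, ⟨h, rfl⟩, rfl⟩

lemma IsPlaneTree.dropLast_mem {T : Finset (List ℕ)} (hT : IsPlaneTree T) {v : List ℕ}
    (hv : v ∈ T) (hne : v ≠ []) : v.dropLast ∈ T := by
  have h : v.dropLast ++ [v.getLast hne] = v := List.dropLast_append_getLast hne
  exact hT.2.1 _ _ (h ▸ hv)

lemma IsPlaneTree.head_mem {T : Finset (List ℕ)} (hT : IsPlaneTree T) {a : ℕ} {w : List ℕ}
    (h : a :: w ∈ T) : [a] ∈ T := by
  induction w using List.reverseRecOn with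
  | nil => exact h
  | append_singleton w i ih =>
    exact ih (hT.2.1 (a :: w) i (by simpa using h))

lemma childCount_subt {T : Finset (List ℕ)} (j : ℕ) (w : List ℕ) :
    childCount (subt j T) w = childCount T (j :: w) := by
  unfold childCount
  apply Finset.card_bij (fun x _ => j :: x)
  · rintro x hx
    rw [Finset.mem_filter] at hx ⊢
    obtain ⟨hx1, hx2, hx3⟩ := hx
    refine ⟨mem_subt.mp hx1, by simp, ?_⟩
    obtain ⟨y, ys, rfl⟩ := List.exists_cons_of_ne_nil hx2
    rw [List.dropLast_cons₂, hx3]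
  · intro x hx y hy h
    exact (List.cons_injective h)
  · rintro v hv
    rw [Finset.mem_filter] at hv
    obtain ⟨hv1, hv2, hv3⟩ := hv
    cases v with
    | nil => exact absurd rfl hv2
    | cons a t =>
      cases t with
      | nil => simp at hv3
      | cons b t' =>
        rw [List.dropLast_cons₂, List.cons.injEq] at hv3
        obtain ⟨rfl, hdl⟩ := hv3
        refine ⟨b :: t', ?_, rfl⟩
        rw [Finset.mem_filter]
        exact ⟨mem_subt.mpr hv1, by simp, hdl⟩

lemma IsPlaneTree.subt {T : Finset (List ℕ)} (hT : IsPlaneTree T) {j : ℕ}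
    (hj1 : 1 ≤ j) (hjk : j ≤ childCount T []) : IsPlaneTree (subt j T) := by
  have hroot : [j] ∈ T := by
    have := (hT.2.2.2 [] hT.1 j).mpr ⟨hj1, hjk⟩
    simpa using this
  refine ⟨mem_subt.mpr (by simpa using hroot), ?_, ?_, ?_⟩
  · intro u i h
    have : (j :: u) ++ [i] ∈ T := by simpa using mem_subt.mp h
    exact mem_subt.mpr (hT.2.1 _ _ this)
  · intro v hv i hi
    exact hT.2.2.1 (j :: v) (mem_subt.mp hv) i (List.mem_cons_of_mem _ hi)
  · intro u hu i
    have h1 : u ++ [i] ∈ PaperWeill.subt j T ↔ (j :: u) ++ [i] ∈ T := by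
      rw [mem_subt]; simp
    rw [h1, hT.2.2.2 (j :: u) (mem_subt.mp hu) i, childCount_subt]

lemma subt_card_le {T : Finset (List ℕ)} (hT : IsPlaneTree T) (j : ℕ) :
    (subt j T).card ≤ T.card - 1 := by
  have h1 : (subt j T).card ≤ (T.filter fun v => v.head? = some j).card :=
    Finset.card_image_le
  have h2 : (T.filter fun v => v.head? = some j) ⊆ T.erase [] := by
    intro v hv
    rw [Finset.mem_filter] at hv
    rw [Finset.mem_erase]
    refine ⟨?_, hv.1⟩
    intro h; subst h; simp at hv
  calc (subt j T).card ≤ (T.erase []).card := h1.trans (Finset.card_le_card h2)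
    _ = T.card - 1 := Finset.card_erase_of_mem hT.1

lemma mem_plane_iff {T : Finset (List ℕ)} (hT : IsPlaneTree T) {v : List ℕ} :
    v ∈ T ↔ v = [] ∨ ∃ i ∈ Finset.range (childCount T []),
      ∃ w ∈ subt (i + 1) T, v = (i + 1) :: w := by
  constructor
  · intro hv
    cases v with
    | nil => exact Or.inl rfl
    | cons a t =>
      right
      have ha : [a] ∈ T := hT.head_mem hv
      have hab : 1 ≤ a ∧ a ≤ childCount T [] := by
        have := (hT.2.2.2 [] hT.1 a).mp (by simpa using ha)
        exact this
      refine ⟨a - 1, ?_, t, ?_, ?_⟩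
      · rw [Finset.mem_range]; omega
      · rw [mem_subt]; have : a - 1 + 1 = a := by omega
        rw [this]; exact hv
      · have : a - 1 + 1 = a := by omega
        rw [this]
  · rintro (rfl | ⟨i, _, w, hw, rfl⟩)
    · exact hT.1
    · exact mem_subt.mp hw

lemma plane_decomp {T : Finset (List ℕ)} (hT : IsPlaneTree T) :
    T = insert [] ((Finset.range (childCount T [])).biUnion
      fun i => (subt (i + 1) T).image ((i + 1) :: ·)) := by
  ext v
  rw [Finset.mem_insert, Finset.mem_biUnion]
  simp only [Finset.mem_image]
  rw [mem_plane_iff hT]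
  constructor
  · rintro (rfl | ⟨i, hi, w, hw, rfl⟩)
    · exact Or.inl rfl
    · exact Or.inr ⟨i, hi, w, hw, rfl⟩
  · rintro (rfl | ⟨i, hi, w, hw, rfl⟩)
    · exact Or.inl rfl
    · exact Or.inr ⟨i, hi, w, hw, rfl⟩

/-- ENNReal-valued tree weight. -/
def TW (g₀ g₁ : ℕ → ℝ≥0∞) (T : Finset (List ℕ)) : ℝ≥0∞ :=
  ∏ u ∈ T, if Even u.length then g₀ (childCount T u) else g₁ (childCount T u)

lemma TW_eq {T : Finset (List ℕ)} (hT : IsPlaneTree T) (g₀ g₁ : ℕ → ℝ≥0∞) :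
    TW g₀ g₁ T = g₀ (childCount T []) *
      ∏ i ∈ Finset.range (childCount T []), TW g₁ g₀ (subt (i + 1) T) := by
  set k := childCount T [] with hk
  set F : List ℕ → ℝ≥0∞ := fun u =>
    if Even u.length then g₀ (childCount T u) else g₁ (childCount T u) with hF
  have hS : T = insert [] ((Finset.range k).biUnion
      fun i => (subt (i + 1) T).image ((i + 1) :: ·)) := plane_decomp hT
  have hnotmem : ([] : List ℕ) ∉ (Finset.range k).biUnion
      (fun i => (subt (i + 1) T).image ((i + 1) :: ·)) := by
    rw [Finset.mem_biUnion]
    rintro ⟨i, _, h⟩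
    rw [Finset.mem_image] at h
    obtain ⟨w, _, h⟩ := h
    exact absurd h (by simp)
  have step1 : TW g₀ g₁ T = ∏ u ∈ insert [] ((Finset.range k).biUnion
      fun i => (subt (i + 1) T).image ((i + 1) :: ·)), F u :=
    Finset.prod_congr hS (fun _ _ => rfl)
  rw [step1, Finset.prod_insert hnotmem]
  have hF0 : F [] = g₀ k := by simp [hF]; rfl
  rw [hF0]
  congr 1
  rw [Finset.prod_biUnion]
  · apply Finset.prod_congr rfl
    intro i _
    rw [Finset.prod_image (by intro x _ y _ h; exact List.cons_injective h)]
    apply Finset.prod_congr rfl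
    intro w _
    simp only [hF, TW, List.length_cons, Nat.even_add_one, childCount_subt]
    by_cases h : Even w.length
    · rw [if_neg (by simpa using h), if_pos h]
    · rw [if_pos h, if_neg h]
  · intro i _ i' _ hne
    apply Finset.disjoint_left.mpr
    intro v hv hv'
    simp only [Finset.mem_image] at hv hv'
    obtain ⟨w, _, rfl⟩ := hv
    obtain ⟨w', _, h⟩ := hv'
    apply hne
    have := (List.cons.injEq _ _ _ _).mp h.symm
    omega


lemma plane_ext {T T' : Finset (List ℕ)} (hT : IsPlaneTree T) (hT' : IsPlaneTree T')
    (hk : childCount T [] = childCount T' [])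
    (hsub : ∀ i < childCount T [], subt (i + 1) T = subt (i + 1) T') : T = T' := by
  rw [plane_decomp hT, plane_decomp hT', hk]
  congr 1
  apply Finset.biUnion_congr rfl
  intro i hi
  rw [Finset.mem_range, ← hk] at hi
  rw [hsub i hi]

/-- The equivalence between `β × (Fin k → β)` and `Fin (k+1) → β` by `Fin.cons`. -/
def consEquiv' {β : Type*} (k : ℕ) : β × (Fin k → β) ≃ (Fin (k + 1) → β) where
  toFun p := Fin.cons p.1 p.2
  invFun f := (f 0, fun i => f i.succ)
  left_inv := by rintro ⟨x, t⟩; simp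
  right_inv f := Fin.cons_self_tail f

lemma tsum_pi_pow {β : Type*} (F : β → ℝ≥0∞) :
    ∀ k : ℕ, (∑' t : Fin k → β, ∏ j, F (t j)) = (∑' b, F b) ^ k := by
  intro k
  induction k with
  | zero =>
    rw [pow_zero]
    have h : (fun t : Fin 0 → β => ∏ j, F (t j)) = fun _ => 1 := by
      funext t; simp
    rw [h]
    exact tsum_eq_single (fun i => i.elim0) (fun b hb =>
      absurd (funext fun i => i.elim0) hb)
  | succ k ih =>
    rw [← (consEquiv' k (β := β)).tsum_eq (fun t => ∏ j, F (t j))]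
    have hpt : ∀ p : β × (Fin k → β),
        (∏ j, F ((consEquiv' k p) j)) = F p.1 * ∏ j : Fin k, F (p.2 j) := by
      rintro ⟨x, t⟩
      rw [Fin.prod_univ_succ]
      show F ((Fin.cons x t : Fin (k + 1) → β) 0) *
        ∏ i : Fin k, F ((Fin.cons x t : Fin (k + 1) → β) i.succ) = F x * ∏ j : Fin k, F (t j)
      simp only [Fin.cons_zero, Fin.cons_succ]
    calc (∑' p : β × (Fin k → β), ∏ j, F ((consEquiv' k p) j))
        = ∑' p : β × (Fin k → β), F p.1 * ∏ j : Fin k, F (p.2 j) := tsum_congr hpt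
      _ = ∑' (x : β) (t : Fin k → β), F x * ∏ j : Fin k, F (t j) := ENNReal.tsum_prod'
      _ = ∑' x : β, F x * ∑' t : Fin k → β, ∏ j : Fin k, F (t j) := by
          apply tsum_congr; intro x; exact ENNReal.tsum_mul_left
      _ = (∑' x : β, F x) * (∑' b, F b) ^ k := by
          rw [ih, ENNReal.tsum_mul_right]
      _ = (∑' b, F b) ^ (k + 1) := by rw [pow_succ, mul_comm]

lemma gf_aux : ∀ (C : ℕ) (g₀ g₁ : ℕ → ℝ≥0∞) (y₀ y₁ : ℝ≥0∞),
    (∑' k, g₀ k * y₁ ^ k) ≤ y₀ → (∑' k, g₁ k * y₀ ^ k) ≤ y₁ →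
    (∑' T : Finset (List ℕ),
      if IsPlaneTree T ∧ T.card ≤ C then TW g₀ g₁ T else 0) ≤ y₀ := by
  intro C
  induction C with
  | zero =>
    intro g₀ g₁ y₀ y₁ h0 h1
    have h : (fun T : Finset (List ℕ) =>
        if IsPlaneTree T ∧ T.card ≤ 0 then TW g₀ g₁ T else 0) = fun _ => 0 := by
      funext T
      rw [if_neg]
      rintro ⟨hT, hc⟩
      have : 0 < T.card := Finset.card_pos.mpr ⟨[], hT.1⟩
      omega
    rw [h, tsum_zero]
    exact zero_le
  | succ C ih =>
    intro g₀ g₁ y₀ y₁ h0 h1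
    set P : Set (Finset (List ℕ)) := {T | IsPlaneTree T ∧ T.card ≤ C + 1} with hP
    have hind : (fun T : Finset (List ℕ) =>
        if IsPlaneTree T ∧ T.card ≤ C + 1 then TW g₀ g₁ T else 0) =
        P.indicator (TW g₀ g₁) := by
      funext T
      by_cases h : IsPlaneTree T ∧ T.card ≤ C + 1
      · rw [if_pos h]; exact (Set.indicator_of_mem (show T ∈ P from h) _).symm
      · rw [if_neg h]; exact (Set.indicator_of_notMem (show T ∉ P from h) _).symm
    rw [hind, ← tsum_subtype P (TW g₀ g₁)]
    set g : (Σ k : ℕ, Fin k → Finset (List ℕ)) → ℝ≥0∞ := fun σ =>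
      g₀ σ.1 * ∏ i, (if IsPlaneTree (σ.2 i) ∧ (σ.2 i).card ≤ C
        then TW g₁ g₀ (σ.2 i) else 0) with hg
    set Φ : P → (Σ k : ℕ, Fin k → Finset (List ℕ)) := fun Tp =>
      ⟨childCount Tp.1 [], fun i => subt (i.1 + 1) Tp.1⟩ with hΦ
    have hinj : Function.Injective Φ := by
      rintro ⟨T, hT⟩ ⟨T', hT'⟩ h
      simp only [hΦ] at h
      have hk : childCount T [] = childCount T' [] := congrArg Sigma.fst h
      apply Subtype.ext
      apply plane_ext hT.1 hT'.1 hk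
      intro i hi
      have h2 := congrArg (fun σ : (Σ k : ℕ, Fin k → Finset (List ℕ)) =>
        if hlt : i < σ.1 then σ.2 ⟨i, hlt⟩ else ∅) h
      simp only at h2
      rw [dif_pos hi, dif_pos (hk ▸ hi)] at h2
      exact h2
    have hpt : ∀ Tp : P, TW g₀ g₁ Tp.1 = g (Φ Tp) := by
      rintro ⟨T, hT, hcard⟩
      have hone : 1 ≤ T.card := Finset.card_pos.mpr ⟨[], hT.1⟩
      simp only [hΦ, hg]
      rw [TW_eq hT g₀ g₁]
      congr 1
      rw [← Fin.prod_univ_eq_prod_range (fun i => TW g₁ g₀ (subt (i + 1) T))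
        (childCount T [])]
      apply Finset.prod_congr rfl
      intro i _
      rw [if_pos]
      constructor
      · exact hT.subt (by omega) i.2
      · have := subt_card_le hT (i.1 + 1)
        omega
    calc (∑' Tp : P, TW g₀ g₁ Tp.1)
        = ∑' Tp : P, g (Φ Tp) := tsum_congr hpt
      _ ≤ ∑' σ, g σ := ENNReal.tsum_comp_le_tsum_of_injective hinj g
      _ = ∑' k : ℕ, ∑' t : Fin k → Finset (List ℕ), g ⟨k, t⟩ := ENNReal.tsum_sigma' g
      _ = ∑' k : ℕ, g₀ k * (∑' S : Finset (List ℕ),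
            if IsPlaneTree S ∧ S.card ≤ C then TW g₁ g₀ S else 0) ^ k := by
          apply tsum_congr
          intro k
          rw [show (∑' t : Fin k → Finset (List ℕ), g ⟨k, t⟩) =
            ∑' t : Fin k → Finset (List ℕ), g₀ k * ∏ i,
              (if IsPlaneTree (t i) ∧ (t i).card ≤ C then TW g₁ g₀ (t i) else 0)
            from rfl, ENNReal.tsum_mul_left,
            tsum_pi_pow (fun S : Finset (List ℕ) =>
              if IsPlaneTree S ∧ S.card ≤ C then TW g₁ g₀ S else 0) k]
      _ ≤ ∑' k : ℕ, g₀ k * y₁ ^ k := by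
          apply ENNReal.tsum_le_tsum
          intro k
          exact mul_le_mul_right (pow_le_pow_left' (ih g₁ g₀ y₁ y₀ h1 h0) k) _
      _ ≤ y₀ := h0

lemma TS_le (g₀ g₁ : ℕ → ℝ≥0∞) (y₀ y₁ : ℝ≥0∞)
    (h0 : (∑' k, g₀ k * y₁ ^ k) ≤ y₀) (h1 : (∑' k, g₁ k * y₀ ^ k) ≤ y₁) :
    (∑' T : Finset (List ℕ), if IsPlaneTree T then TW g₀ g₁ T else 0) ≤ y₀ := by
  rw [ENNReal.tsum_eq_iSup_sum]
  apply iSup_le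
  intro s
  set C := s.sup Finset.card with hC
  calc (∑ T ∈ s, if IsPlaneTree T then TW g₀ g₁ T else 0)
      ≤ ∑ T ∈ s, (if IsPlaneTree T ∧ T.card ≤ C then TW g₀ g₁ T else 0) := by
        apply Finset.sum_le_sum
        intro T hTs
        by_cases h : IsPlaneTree T
        · rw [if_pos h, if_pos ⟨h, Finset.le_sup hTs⟩]
        · rw [if_neg h]; exact zero_le
    _ ≤ ∑' T : Finset (List ℕ), (if IsPlaneTree T ∧ T.card ≤ C then TW g₀ g₁ T else 0) :=
        ENNReal.sum_le_tsum s
    _ ≤ y₀ := gf_aux C g₀ g₁ y₀ y₁ h0 h1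

lemma treeWt_split (μ₀ μ₁ : ℕ → ℝ) (T : Finset (List ℕ)) :
    treeWt μ₀ μ₁ T = (∏ v ∈ type0 T, μ₀ (childCount T v)) *
      ∏ v ∈ type1 T, μ₁ (childCount T v) := by
  rw [treeWt, type0, type1,
    ← Finset.prod_filter_mul_prod_filter_not T (fun v => Even v.length)]
  congr 1
  · apply Finset.prod_congr rfl
    intro v hv
    rw [if_pos (Finset.mem_filter.mp hv).2]
  · apply Finset.prod_congr rfl
    intro v hv
    rw [if_neg (Finset.mem_filter.mp hv).2]

lemma sum_childCount_type0 {T : Finset (List ℕ)} (hT : IsPlaneTree T) :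
    (∑ v ∈ type0 T, childCount T v) = t1card T := by
  have hmap : ∀ w ∈ type1 T, w.dropLast ∈ type0 T := by
    intro w hw
    rw [type1, Finset.mem_filter] at hw
    obtain ⟨hw1, hw2⟩ := hw
    have hne : w ≠ [] := by
      rintro rfl; exact hw2 (by simp)
    rw [type0, Finset.mem_filter]
    refine ⟨hT.dropLast_mem hw1 hne, ?_⟩
    rw [List.length_dropLast]
    rw [Nat.even_iff] at hw2 ⊢
    have : 1 ≤ w.length := List.length_pos_iff.mpr hne
    omega
  have h := Finset.card_eq_sum_card_fiberwise hmap
  rw [t1card, h]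
  apply Finset.sum_congr rfl
  intro v hv
  rw [type0, Finset.mem_filter] at hv
  rw [childCount]
  congr 1
  rw [type1, Finset.filter_filter]
  apply Finset.filter_congr
  intro w hw
  have key : w.dropLast = v → (¬Even w.length ↔ w ≠ []) := by
    intro hw3
    constructor
    · intro hw2; rintro rfl; exact hw2 (by simp)
    · intro hne hcontra
      have hlen : w.length = v.length + 1 := by
        rw [← hw3, List.length_dropLast]
        have : 1 ≤ w.length := List.length_pos_iff.mpr hne
        omega
      rw [hlen, Nat.even_add_one] at hcontra
      exact hcontra hv.2
  constructor
  · rintro ⟨hw2, hw3⟩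
    refine ⟨?_, hw3⟩
    first
      | exact (key hw3).mp hw2
      | exact (key hw3).mpr hw2
  · rintro ⟨hw2, hw3⟩
    refine ⟨?_, hw3⟩
    first
      | exact (key hw3).mp hw2
      | exact (key hw3).mpr hw2

lemma leaves0_eq (T : Finset (List ℕ)) :
    leaves0 T = (type0 T).filter fun v => childCount T v = 0 := by
  rw [leaves0, type0, Finset.filter_filter]

/-- The tilted weight is the weight times an exponential functional. -/
lemma treeWt_tilt {T : Finset (List ℕ)} (hT : IsPlaneTree T) (μ₀ μ₁ : ℕ → ℝ) (a b : ℝ) :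
    treeWt (fun k => μ₀ k * Real.exp (a * (if k = 0 then 1 else 0) + b * k)) μ₁ T =
      treeWt μ₀ μ₁ T *
        Real.exp (a * (leaves0 T).card + b * (t1card T)) := by
  rw [treeWt_split, treeWt_split]
  have h1 : (∏ v ∈ type0 T, μ₀ (childCount T v) *
      Real.exp (a * (if childCount T v = 0 then 1 else 0) + b * (childCount T v))) =
      (∏ v ∈ type0 T, μ₀ (childCount T v)) *
      ∏ v ∈ type0 T, Real.exp (a * (if childCount T v = 0 then 1 else 0) +
        b * (childCount T v)) := Finset.prod_mul_distrib
  rw [h1, ← Real.exp_sum]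
  have h2 : (∑ v ∈ type0 T, (a * (if childCount T v = 0 then 1 else 0) +
      b * (childCount T v))) = a * (leaves0 T).card + b * (t1card T) := by
    rw [Finset.sum_add_distrib, ← Finset.mul_sum, ← Finset.mul_sum]
    congr 2
    · rw [Finset.sum_boole, leaves0_eq]
    · rw [← sum_childCount_type0 hT]
      push_cast
      rfl
  rw [h2]
  ring

lemma treeWt_nonneg {μ₀ μ₁ : ℕ → ℝ} (h0 : ∀ k, 0 ≤ μ₀ k) (h1 : ∀ k, 0 ≤ μ₁ k)
    (T : Finset (List ℕ)) : 0 ≤ treeWt μ₀ μ₁ T := by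
  apply Finset.prod_nonneg
  intro u _
  by_cases h : Even u.length
  · rw [if_pos h]; exact h0 _
  · rw [if_neg h]; exact h1 _

lemma ofReal_treeWt {μ₀ μ₁ : ℕ → ℝ} (h0 : ∀ k, 0 ≤ μ₀ k) (h1 : ∀ k, 0 ≤ μ₁ k)
    (T : Finset (List ℕ)) :
    ENNReal.ofReal (treeWt μ₀ μ₁ T) =
      TW (fun k => ENNReal.ofReal (μ₀ k)) (fun k => ENNReal.ofReal (μ₁ k)) T := by
  rw [treeWt, TW, ENNReal.ofReal_prod_of_nonneg]
  · apply Finset.prod_congr rfl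
    intro u _
    by_cases h : Even u.length
    · rw [if_pos h, if_pos h]
    · rw [if_neg h, if_neg h]
  · intro u _
    by_cases h : Even u.length
    · rw [if_pos h]; exact h0 _
    · rw [if_neg h]; exact h1 _

/-- Convert an `ENNReal` bound on a sum of nonnegative reals to a real bound. -/
lemma realify {ι : Type*} {f : ι → ℝ} (hf : ∀ i, 0 ≤ f i) {r : ℝ} (hr : 0 ≤ r)
    (h : (∑' i, ENNReal.ofReal (f i)) ≤ ENNReal.ofReal r) : (∑' i, f i) ≤ r := by
  by_cases hs : Summable f
  · rw [← ENNReal.ofReal_tsum_of_nonneg hf hs] at h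
    exact (ENNReal.ofReal_le_ofReal_iff hr).mp h
  · rw [tsum_eq_zero_of_not_summable hs]
    exact hr

/-! ### Elementary inequalities -/

lemma exp_quad_upper {x : ℝ} (h0 : 0 ≤ x) (h1 : x ≤ 1) :
    Real.exp x ≤ 1 + x + 3 * x ^ 2 := by
  have h2 : Real.exp x - 1 ≤ x * Real.exp x := by
    have := Real.add_one_le_exp (-x)
    have hpos := Real.exp_pos x
    have hmul : Real.exp (-x) * Real.exp x = 1 := by
      rw [← Real.exp_add]; simp
    nlinarith
  have h3 : Real.exp x ≤ 3 := by
    calc Real.exp x ≤ Real.exp 1 := Real.exp_le_exp.mpr h1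
      _ ≤ 3 := by have := Real.exp_one_lt_d9; linarith
  nlinarith [Real.exp_pos x]

lemma exp_neg_quad_upper {x : ℝ} (h0 : 0 ≤ x) :
    Real.exp (-x) ≤ 1 - x + x ^ 2 := by
  have h4 : Real.exp (-x) * (1 + x) ≤ 1 := by
    have h1 := Real.add_one_le_exp x
    have h5 : Real.exp (-x) * Real.exp x = 1 := by rw [← Real.exp_add]; simp
    have h6 := Real.exp_nonneg (-x)
    nlinarith
  have h6 := Real.exp_nonneg (-x)
  nlinarith [mul_nonneg (mul_nonneg h0 h0) h0]

lemma one_sub_le_exp_neg (x : ℝ) : 1 - x ≤ Real.exp (-x) := by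
  have := Real.add_one_le_exp (-x)
  linarith

lemma poly_bound (k : ℕ) {u : ℝ} (h0 : 0 ≤ u) (h1 : u ≤ 1) :
    (1 - u) ^ k ≤ 1 - k * u + (k : ℝ) ^ 2 * u ^ 2 / 2 := by
  induction k with
  | zero => simp
  | succ n ih =>
    have hpos : (0 : ℝ) ≤ 1 - u := by linarith
    have step : (1 - u) ^ (n + 1) ≤ (1 - (n : ℝ) * u + (n : ℝ) ^ 2 * u ^ 2 / 2) * (1 - u) := by
      rw [pow_succ]
      exact mul_le_mul_of_nonneg_right ih hpos
    push_cast
    nlinarith [sq_nonneg u, mul_nonneg (mul_nonneg (sq_nonneg (n : ℝ)) (sq_nonneg u)) h0,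
      mul_nonneg (mul_nonneg h0 h0) h0, sq_nonneg ((n : ℝ) * u)]

/-! ### Facts about `μ₀`, `μ₁` for a regular critical weight sequence -/

section RegCritFacts

variable {q : ℕ → ℝ} {Z : ℝ} (hq : RegCrit q Z)

lemma RC.sum_mom (hq : RegCrit q Z) (j : ℕ) :
    Summable (fun k : ℕ => (k : ℝ) ^ j * ((Ncoef (k + 1) : ℝ) * q (k + 1) * Z ^ k)) := by
  obtain ⟨R, hZR, hRsum⟩ := hq.regular
  have hR0 : 0 < R := lt_trans hq.Zpos hZR
  have hr0 : 0 ≤ Z / R := div_nonneg hq.Zpos.le hR0.le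
  have hr1 : Z / R < 1 := (div_lt_one hR0).mpr hZR
  have hs : Summable (fun k : ℕ => (k : ℝ) ^ j * (Z / R) ^ k) :=
    summable_pow_mul_geometric_of_norm_lt_one j
      (by rw [Real.norm_eq_abs, abs_of_nonneg hr0]; exact hr1)
  obtain ⟨C, hC⟩ := hs.tendsto_atTop_zero.bddAbove_range
  have hCb : ∀ k : ℕ, (k : ℝ) ^ j * (Z / R) ^ k ≤ C := fun k => hC ⟨k, rfl⟩
  apply Summable.of_nonneg_of_le (f := fun k => C * ((Ncoef (k + 1) : ℝ) * q (k + 1) * R ^ k))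
  · intro k
    exact mul_nonneg (pow_nonneg (Nat.cast_nonneg k) j)
      (mul_nonneg (mul_nonneg (Nat.cast_nonneg _) (hq.nonneg (k + 1)))
        (pow_nonneg hq.Zpos.le k))
  · intro k
    have hq1 : 0 ≤ (Ncoef (k + 1) : ℝ) * q (k + 1) * R ^ k :=
      mul_nonneg (mul_nonneg (Nat.cast_nonneg _) (hq.nonneg (k + 1))) (pow_nonneg hR0.le k)
    have hsplit : (k : ℝ) ^ j * ((Ncoef (k + 1) : ℝ) * q (k + 1) * Z ^ k) =
        ((k : ℝ) ^ j * (Z / R) ^ k) * ((Ncoef (k + 1) : ℝ) * q (k + 1) * R ^ k) := by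
      rw [div_pow]
      field_simp
    rw [hsplit]
    exact mul_le_mul_of_nonneg_right (hCb k) hq1
  · exact hRsum.mul_left C

lemma RC.sumZ (hq : RegCrit q Z) :
    Summable (fun k : ℕ => (Ncoef (k + 1) : ℝ) * q (k + 1) * Z ^ k) := by
  have := RC.sum_mom hq 0
  simpa using this

lemma RC.f_pos (hq : RegCrit q Z) : 0 < fq q Z := by
  obtain ⟨i, hi2, hqi⟩ := hq.some_pos
  have hterm : 0 < (Ncoef (i - 1 + 1) : ℝ) * q (i - 1 + 1) * Z ^ (i - 1) := by
    have h1 : i - 1 + 1 = i := by omega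
    rw [h1]
    have hN : 0 < Ncoef i := by unfold Ncoef; exact Nat.choose_pos (by omega)
    have hN' : (0:ℝ) < Ncoef i := by exact_mod_cast hN
    exact mul_pos (mul_pos hN' hqi) (pow_pos hq.Zpos (i - 1))
  have hle : (Ncoef (i - 1 + 1) : ℝ) * q (i - 1 + 1) * Z ^ (i - 1) ≤ fq q Z := by
    apply Summable.le_tsum (RC.sumZ hq) (i - 1)
    intro j _
    exact mul_nonneg (mul_nonneg (Nat.cast_nonneg _) (hq.nonneg (j + 1)))
      (pow_nonneg hq.Zpos.le j)
  linarith

lemma RC.Z_gt_one (hq : RegCrit q Z) : 1 < Z := by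
  have h1 := RC.f_pos hq
  rw [hq.fixedPoint] at h1
  have h2 : 1 / Z < 1 := by linarith
  rw [div_lt_one hq.Zpos] at h2
  exact h2

lemma RC.f_lt_one (hq : RegCrit q Z) : fq q Z < 1 := by
  rw [hq.fixedPoint]
  have h1 : 0 < 1 / Z := div_pos one_pos hq.Zpos
  linarith

lemma RC.f_eq (hq : RegCrit q Z) : fq q Z = 1 - Z⁻¹ := by
  rw [hq.fixedPoint, one_div]

lemma RC.mu1_nonneg (hq : RegCrit q Z) (k : ℕ) : 0 ≤ mu1 q Z k := by
  rw [mu1]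
  exact div_nonneg (mul_nonneg (mul_nonneg (pow_nonneg hq.Zpos.le k)
    (Nat.cast_nonneg _)) (hq.nonneg (k + 1))) (RC.f_pos hq).le

lemma RC.mu0_nonneg (hq : RegCrit q Z) (k : ℕ) : 0 ≤ mu0 q Z k := by
  rw [mu0]
  have h1 := (RC.f_pos hq)
  have h2 := hq.Zpos
  positivity

lemma RC.mu1_summable (hq : RegCrit q Z) : Summable (mu1 q Z) := by
  have h := (RC.sumZ hq).mul_right (fq q Z)⁻¹
  apply h.congr
  intro k
  rw [mu1]
  ring

lemma RC.mu1_tsum (hq : RegCrit q Z) : (∑' k, mu1 q Z k) = 1 := by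
  have h1 : (fun k => mu1 q Z k) =
      fun k => ((Ncoef (k + 1) : ℝ) * q (k + 1) * Z ^ k) * (fq q Z)⁻¹ := by
    funext k; rw [mu1]; ring
  rw [h1, tsum_mul_right, ← fq, mul_inv_cancel₀ (RC.f_pos hq).ne']

lemma RC.k_mu1_summable (hq : RegCrit q Z) :
    Summable (fun k : ℕ => (k : ℝ) * mu1 q Z k) := by
  have h := (RC.sum_mom hq 1).mul_right (fq q Z)⁻¹
  apply h.congr
  intro k
  rw [mu1]
  ring

lemma RC.k2_mu1_summable (hq : RegCrit q Z) :
    Summable (fun k : ℕ => (k : ℝ) ^ 2 * mu1 q Z k) := by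
  have h := (RC.sum_mom hq 2).mul_right (fq q Z)⁻¹
  apply h.congr
  intro k
  rw [mu1]
  ring

lemma RC.mean_eq (hq : RegCrit q Z) : meanMu1 q Z = Z⁻¹ * (fq q Z)⁻¹ := by
  have h1 : (fun k : ℕ => (k : ℝ) * mu1 q Z k) =
      fun k : ℕ => ((k : ℝ) * (Ncoef (k + 1) : ℝ) * q (k + 1) * Z ^ (k - 1)) *
        (Z * (fq q Z)⁻¹) := by
    funext k
    cases k with
    | zero => simp
    | succ n =>
      rw [mu1]
      have h2 : n + 1 - 1 = n := rfl
      rw [h2, pow_succ]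
      field_simp
  rw [meanMu1, h1, tsum_mul_right, ← fq']
  have hZ : Z ≠ 0 := hq.Zpos.ne'
  have h3 : fq' q Z = (Z ^ 2)⁻¹ := by
    have hc := hq.critical
    have hZ2 : (Z ^ 2) ≠ 0 := pow_ne_zero 2 hZ
    field_simp
    linear_combination hc
  rw [h3, pow_two, mul_inv]
  calc Z⁻¹ * Z⁻¹ * (Z * (fq q Z)⁻¹) = (Z⁻¹ * Z) * (Z⁻¹ * (fq q Z)⁻¹) := by ring
    _ = Z⁻¹ * (fq q Z)⁻¹ := by rw [inv_mul_cancel₀ hZ, one_mul]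

lemma RC.mean_pos (hq : RegCrit q Z) : 0 < meanMu1 q Z := by
  rw [RC.mean_eq hq]
  have := RC.f_pos hq
  have := hq.Zpos
  positivity

/-- Quadratic upper bound for the generating function of `μ₁` below 1. -/
lemma RC.mu1_gen_bound (hq : RegCrit q Z) {u : ℝ} (h0 : 0 ≤ u) (h1 : u ≤ 1) :
    (∑' k, mu1 q Z k * (1 - u) ^ k) ≤
      1 - meanMu1 q Z * u + (∑' k : ℕ, (k : ℝ) ^ 2 * mu1 q Z k) / 2 * u ^ 2 := by
  have hsum1 : Summable (fun k => mu1 q Z k * (1 - u) ^ k) := by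
    apply Summable.of_nonneg_of_le _ _ (RC.mu1_summable hq)
    · intro k
      exact mul_nonneg (RC.mu1_nonneg hq k) (pow_nonneg (by linarith) k)
    · intro k
      have hm := RC.mu1_nonneg hq k
      have hp : (1 - u) ^ k ≤ 1 := pow_le_one₀ (by linarith) (by linarith)
      calc mu1 q Z k * (1 - u) ^ k ≤ mu1 q Z k * 1 := mul_le_mul_of_nonneg_left hp hm
        _ = mu1 q Z k := mul_one _
  have hsum2 : Summable (fun k : ℕ =>
      mu1 q Z k + (-u) * ((k : ℝ) * mu1 q Z k) +
        u ^ 2 / 2 * ((k : ℝ) ^ 2 * mu1 q Z k)) :=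
    ((RC.mu1_summable hq).add ((RC.k_mu1_summable hq).mul_left (-u))).add
      ((RC.k2_mu1_summable hq).mul_left (u ^ 2 / 2))
  have hle : ∀ k : ℕ, mu1 q Z k * (1 - u) ^ k ≤
      mu1 q Z k + (-u) * ((k : ℝ) * mu1 q Z k) +
        u ^ 2 / 2 * ((k : ℝ) ^ 2 * mu1 q Z k) := by
    intro k
    have hm := RC.mu1_nonneg hq k
    have hp := poly_bound k h0 h1
    nlinarith
  calc (∑' k, mu1 q Z k * (1 - u) ^ k)
      ≤ ∑' k : ℕ, (mu1 q Z k + (-u) * ((k : ℝ) * mu1 q Z k) +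
          u ^ 2 / 2 * ((k : ℝ) ^ 2 * mu1 q Z k)) := Summable.tsum_le_tsum hle hsum1 hsum2
    _ = 1 - meanMu1 q Z * u + (∑' k : ℕ, (k : ℝ) ^ 2 * mu1 q Z k) / 2 * u ^ 2 := by
        rw [Summable.tsum_add ((RC.mu1_summable hq).add ((RC.k_mu1_summable hq).mul_left (-u)))
            ((RC.k2_mu1_summable hq).mul_left (u ^ 2 / 2)),
          Summable.tsum_add (RC.mu1_summable hq) ((RC.k_mu1_summable hq).mul_left (-u)),
          tsum_mul_left, tsum_mul_left, RC.mu1_tsum hq, ← meanMu1]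
        ring

/-- The tilted generating function of `μ₀`. -/
lemma RC.mu0_tilt_sum (hq : RegCrit q Z) (a : ℝ) {s : ℝ} (h0 : 0 ≤ s)
    (h1 : fq q Z * s < 1) :
    Summable (fun k : ℕ => mu0 q Z k * Real.exp (a * (if k = 0 then 1 else 0)) * s ^ k) ∧
    (∑' k : ℕ, mu0 q Z k * Real.exp (a * (if k = 0 then 1 else 0)) * s ^ k) =
      Z⁻¹ * (1 - fq q Z * s)⁻¹ + Z⁻¹ * (Real.exp a - 1) := by
  have hf := RC.f_pos hq
  have hfs0 : 0 ≤ fq q Z * s := by positivity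
  have hgeo : Summable (fun k : ℕ => Z⁻¹ * (fq q Z * s) ^ k) :=
    (summable_geometric_of_lt_one hfs0 h1).mul_left _
  have hsingle : Summable (fun k : ℕ => if k = 0 then Z⁻¹ * (Real.exp a - 1) else 0) :=
    summable_of_ne_finset_zero (s := {0}) (by intro k hk; simp at hk; simp [hk])
  have hpt : (fun k : ℕ => mu0 q Z k * Real.exp (a * (if k = 0 then 1 else 0)) * s ^ k) =
      fun k : ℕ => Z⁻¹ * (fq q Z * s) ^ k + (if k = 0 then Z⁻¹ * (Real.exp a - 1) else 0) := by
    funext k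
    cases k with
    | zero => simp [mu0]; ring
    | succ n =>
      simp only [Nat.succ_ne_zero, if_false, mu0]
      rw [mul_zero, Real.exp_zero, mul_pow]
      ring
  constructor
  · rw [hpt]; exact hgeo.add hsingle
  · rw [hpt, Summable.tsum_add hgeo hsingle, tsum_mul_left,
      tsum_geometric_of_lt_one hfs0 h1, tsum_ite_eq]

end RegCritFacts

set_option maxHeartbeats 1000000 in
lemma calc_upper (p f m1 c B0 B1 C1 lam w δ s : ℝ)
    (hp : 0 < p) (hf : 0 < f) (hpf : p + f = 1) (hB1 : 0 ≤ B1)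
    (hm1 : m1 = p / f) (hc : c = p * m1) (hB0 : B0 = f ^ 2 / p ^ 2)
    (hC1 : C1 = B1 + ((c+1)^2 + (c+1)*m1) + (3*p + B0*(m1+c+1)^2 + 1) * m1)
    (hw : w = m1*lam - B1*lam^2) (hδ : δ = c*lam + C1*lam^2)
    (hs : s = Real.exp (-δ) * (1 - w))
    (hl0 : 0 < lam)
    (hs1 : lam*(m1+1) ≤ 1) (hs2 : lam*(B1+1) ≤ m1) (hs3 : lam*(c+1) ≤ 1)
    (hs4 : lam*C1 ≤ 1) :
    0 ≤ w ∧ w ≤ 1 ∧ 0 ≤ s ∧ s ≤ 1 ∧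
      p*(Real.exp lam - 1) + p * (1 - f*s)⁻¹ ≤ 1 - lam := by
  have hm1p : 0 < m1 := by rw [hm1]; exact div_pos hp hf
  have hcp : 0 < c := by rw [hc]; exact mul_pos hp hm1p
  have hB0p : 0 ≤ B0 := by rw [hB0]; positivity
  have hsq : 0 ≤ (m1+c+1)^2 := sq_nonneg _
  have hC1p : 0 ≤ C1 := by
    rw [hC1]
    have h1 : 0 ≤ (c+1)^2 := sq_nonneg _
    have h2 : 0 ≤ (c+1)*m1 := mul_nonneg (by linarith only [hcp]) hm1p.le
    have h3 : 0 ≤ (3*p + B0*(m1+c+1)^2 + 1) * m1 :=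
      mul_nonneg (by linarith only [mul_nonneg hB0p hsq, hp]) hm1p.le
    linarith only [hB1, h1, h2, h3]
  have hlam1 : lam ≤ 1 := by linarith only [hs1, mul_pos hl0 hm1p]
  have hw0 : 0 ≤ w := by
    rw [hw]
    linarith only [mul_le_mul_of_nonneg_right hs2 hl0.le, mul_pos hl0 hl0]
  have hwle : w ≤ m1 * lam := by
    rw [hw]
    linarith only [mul_nonneg hB1 (sq_nonneg lam)]
  have hw1 : w ≤ 1 := by linarith only [hwle, hs1, hl0]
  have hδ0 : 0 ≤ δ := by
    rw [hδ]
    linarith only [mul_nonneg hC1p (sq_nonneg lam), mul_nonneg hcp.le hl0.le]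
  have hδle : δ ≤ (c+1)*lam := by
    rw [hδ]
    linarith only [mul_le_mul_of_nonneg_right hs4 hl0.le]
  have hδ1 : δ ≤ 1 := by linarith only [hδle, hs3]
  have he1 : Real.exp (-δ) ≤ 1 - δ + δ^2 := exp_neg_quad_upper hδ0
  have he2 : 1 - δ ≤ Real.exp (-δ) := one_sub_le_exp_neg δ
  have hepos : 0 < Real.exp (-δ) := Real.exp_pos _
  have h1w : (0:ℝ) ≤ 1 - w := by linarith only [hw1]
  have hs0 : 0 ≤ s := by rw [hs]; exact mul_nonneg hepos.le h1w
  have hE1 : Real.exp (-δ) ≤ 1 := by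
    linarith only [he1, mul_nonneg hδ0 (sub_nonneg.mpr hδ1)]
  have hsle1 : s ≤ 1 := by
    rw [hs]
    have h := mul_le_mul hE1 (show 1 - w ≤ 1 by linarith only [hw0]) h1w zero_le_one
    linarith only [h]
  set ω := 1 - s with hω
  have hω0 : 0 ≤ ω := by rw [hω]; linarith only [hsle1]
  have hωlo : δ + w - δ^2 - δ*w ≤ ω := by
    rw [hω, hs]
    linarith only [mul_le_mul_of_nonneg_right he1 h1w, mul_nonneg (sq_nonneg δ) hw0]
  have hωhi : ω ≤ δ + w := by
    rw [hω, hs]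
    linarith only [mul_le_mul_of_nonneg_right he2 h1w, mul_nonneg hδ0 hw0]
  have hs' : s = 1 - ω := by rw [hω]; ring
  have hfs : 1 - f*s = p + f*ω := by rw [hs']; linear_combination -hpf
  have hden : 0 < p + f*ω := by linarith only [mul_nonneg hf.le hω0, hp]
  set m0 := f/p with hm0def
  have hm0 : 0 < m0 := div_pos hf hp
  have hm0m1 : m0 * m1 = 1 := by rw [hm0def, hm1]; field_simp
  have hm0c : m0 * c = p := by rw [hm0def, hc, hm1]; field_simp
  have hgeoid : p * (p + f*ω)⁻¹ = 1 - m0*ω + f^2*ω^2 / (p*(p+f*ω)) := by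
    rw [hm0def]
    field_simp
    ring
  have hgeob : f^2*ω^2/(p*(p+f*ω)) ≤ B0*ω^2 := by
    have h1 : p*p ≤ p*(p+f*ω) := by
      linarith only [mul_nonneg hp.le (mul_nonneg hf.le hω0)]
    have h2 : f^2*ω^2/(p*(p+f*ω)) ≤ f^2*ω^2/(p*p) :=
      div_le_div_of_nonneg_left (by positivity) (by positivity) h1
    calc f^2*ω^2/(p*(p+f*ω)) ≤ f^2*ω^2/(p*p) := h2
      _ = B0*ω^2 := by rw [hB0]; ring
  have hgeo : p * (1 - f*s)⁻¹ ≤ 1 - m0*ω + B0*ω^2 := by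
    rw [hfs, hgeoid]; linarith only [hgeob]
  have hcl0 : 0 ≤ (c+1)*lam := mul_nonneg (by linarith only [hcp]) hl0.le
  have hq1 : δ^2 + δ*w ≤ ((c+1)^2 + (c+1)*m1) * lam^2 := by
    have a1 : δ*δ ≤ ((c+1)*lam)*((c+1)*lam) := mul_le_mul hδle hδle hδ0 hcl0
    have a2 : δ*w ≤ ((c+1)*lam)*(m1*lam) := mul_le_mul hδle hwle hw0 hcl0
    linarith only [a1, a2]
  have hq2 : B0*ω^2 ≤ B0*(m1+c+1)^2*lam^2 := by
    have a3 : ω ≤ (m1+c+1)*lam := by linarith only [hωhi, hδle, hwle]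
    have a4 : ω*ω ≤ ((m1+c+1)*lam)*((m1+c+1)*lam) :=
      mul_le_mul a3 a3 hω0 (mul_nonneg (by linarith only [hm1p, hcp]) hl0.le)
    linarith only [mul_le_mul_of_nonneg_left a4 hB0p]
  have hmain : p*lam + lam + (3*p + B0*(m1+c+1)^2 + 1)*lam^2 ≤ m0*ω := by
    have b1 : m0*(δ + w - δ^2 - δ*w) ≤ m0*ω := mul_le_mul_of_nonneg_left hωlo hm0.le
    have b2 : m0*δ = p*lam + m0*C1*lam^2 := by rw [hδ]; linear_combination lam * hm0c
    have b3 : m0*w = lam - m0*B1*lam^2 := by rw [hw]; linear_combination lam * hm0m1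
    have b4 : m0*C1*lam^2 = m0*B1*lam^2 + m0*((c+1)^2 + (c+1)*m1)*lam^2 +
        (3*p + B0*(m1+c+1)^2+1)*lam^2 := by
      rw [hC1]
      linear_combination (3*p + B0*(m1+c+1)^2+1)*lam^2 * hm0m1
    have b5 : m0*(δ^2 + δ*w) ≤ m0*(((c+1)^2 + (c+1)*m1) * lam^2) :=
      mul_le_mul_of_nonneg_left hq1 hm0.le
    linarith only [b1, b2, b3, b4, b5]
  have hexp : Real.exp lam - 1 ≤ lam + 3*lam^2 := by
    have h := exp_quad_upper hl0.le hlam1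
    linarith only [h]
  refine ⟨hw0, hw1, hs0, hsle1, ?_⟩
  have c1 : p*(Real.exp lam - 1) ≤ p*(lam + 3*lam^2) := mul_le_mul_of_nonneg_left hexp hp.le
  have hfinal : p*(lam + 3*lam^2) + (1 - m0*ω + B0*ω^2) ≤ 1 - lam := by
    linarith only [hmain, hq2, sq_nonneg lam]
  calc p*(Real.exp lam - 1) + p * (1 - f*s)⁻¹
      ≤ p*(lam + 3*lam^2) + (1 - m0*ω + B0*ω^2) := add_le_add c1 hgeo
    _ ≤ 1 - lam := hfinal

set_option maxHeartbeats 1000000 in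
lemma calc_lower (p f m1 c B0 B1 C2 lam w δ s : ℝ)
    (hp : 0 < p) (hf : 0 < f) (hpf : p + f = 1) (hB1 : 0 ≤ B1)
    (hm1 : m1 = p / f) (hc : c = p * m1) (hB0 : B0 = f ^ 2 / p ^ 2)
    (hC2 : C2 = B1 + 3*c^2 + (B0*m1^2 + p + 1) * m1)
    (hw : w = m1*lam - B1*lam^2) (hδ : δ = c*lam - C2*lam^2)
    (hs : s = Real.exp δ * (1 - w))
    (hl0 : 0 < lam)
    (hs1 : lam*(m1+1) ≤ 1) (hs2 : lam*(B1+1) ≤ m1) (hs3 : lam*(c+1) ≤ 1)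
    (hs5 : lam*(C2+1) ≤ c) (hs6 : lam*(B1 + 3*c^2 + 1) ≤ m1*f) :
    0 ≤ w ∧ w ≤ 1 ∧ 0 ≤ s ∧ s ≤ 1 ∧
      p*(Real.exp (-lam) - 1) + p * (1 - f*s)⁻¹ ≤ 1 - lam := by
  have hm1p : 0 < m1 := by rw [hm1]; exact div_pos hp hf
  have hcp : 0 < c := by rw [hc]; exact mul_pos hp hm1p
  have hB0p : 0 ≤ B0 := by rw [hB0]; positivity
  have hC2p : 0 ≤ C2 := by
    rw [hC2]
    have h1 : 0 ≤ 3*c^2 := by positivity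
    have h2 : 0 ≤ (B0*m1^2 + p + 1) * m1 :=
      mul_nonneg (by linarith only [mul_nonneg hB0p (sq_nonneg m1), hp]) hm1p.le
    linarith only [hB1, h1, h2]
  have hlam1 : lam ≤ 1 := by linarith only [hs1, mul_pos hl0 hm1p]
  have hw0 : 0 ≤ w := by
    rw [hw]
    linarith only [mul_le_mul_of_nonneg_right hs2 hl0.le, mul_pos hl0 hl0]
  have hwle : w ≤ m1 * lam := by
    rw [hw]
    linarith only [mul_nonneg hB1 (sq_nonneg lam)]
  have hw1 : w ≤ 1 := by linarith only [hwle, hs1, hl0]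
  have hδ0 : 0 ≤ δ := by
    rw [hδ]
    linarith only [mul_le_mul_of_nonneg_right hs5 hl0.le, mul_pos hl0 hl0]
  have hδle : δ ≤ c*lam := by
    rw [hδ]
    linarith only [mul_nonneg hC2p (sq_nonneg lam)]
  have hδ1 : δ ≤ 1 := by linarith only [hδle, hs3, hl0]
  have heU : Real.exp δ ≤ 1 + δ + 3*δ^2 := exp_quad_upper hδ0 hδ1
  have heL : 1 + δ ≤ Real.exp δ := by
    have h := Real.add_one_le_exp δ
    linarith only [h]
  have hepos : 0 < Real.exp δ := Real.exp_pos _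
  have h1w : (0:ℝ) ≤ 1 - w := by linarith only [hw1]
  have hs0 : 0 ≤ s := by rw [hs]; exact mul_nonneg hepos.le h1w
  set ω := 1 - s with hω
  have hωhi : ω ≤ w := by
    rw [hω, hs]
    linarith only [mul_le_mul_of_nonneg_right heL h1w, mul_nonneg hδ0 h1w]
  have hωlo : w - δ - 3*δ^2 ≤ ω := by
    rw [hω, hs]
    linarith only [mul_le_mul_of_nonneg_right heU h1w, mul_nonneg hδ0 hw0,
      mul_nonneg (mul_nonneg (by norm_num : (0:ℝ) ≤ 3) (sq_nonneg δ)) hw0]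
  have hmc : m1*f = m1 - c := by rw [hc]; linear_combination m1 * hpf
  have hmcl : m1*f*lam = m1*lam - c*lam := by linear_combination lam * hmc
  have hcl0 : 0 ≤ c*lam := mul_nonneg hcp.le hl0.le
  have hd2 : δ^2 ≤ c^2*lam^2 := by
    linarith only [mul_le_mul hδle hδle hδ0 hcl0]
  have hω0 : 0 ≤ ω := by
    have hmf : m1*f*lam - (B1 + 3*c^2)*lam^2 ≤ w - δ - 3*δ^2 := by
      rw [hw]
      linarith only [hδ, hd2, mul_nonneg hC2p (sq_nonneg lam), hmcl]
    have hmf2 : 0 ≤ m1*f*lam - (B1 + 3*c^2)*lam^2 := by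
      linarith only [mul_le_mul_of_nonneg_right hs6 hl0.le, mul_pos hl0 hl0]
    linarith only [hmf, hmf2, hωlo]
  have hsle1 : s ≤ 1 := by
    have h := hω0
    rw [hω] at h
    linarith only [h]
  have hs' : s = 1 - ω := by rw [hω]; ring
  have hfs : 1 - f*s = p + f*ω := by rw [hs']; linear_combination -hpf
  have hden : 0 < p + f*ω := by linarith only [mul_nonneg hf.le hω0, hp]
  set m0 := f/p with hm0def
  have hm0 : 0 < m0 := div_pos hf hp
  have hm0m1 : m0 * m1 = 1 := by rw [hm0def, hm1]; field_simp
  have hm0c : m0 * c = p := by rw [hm0def, hc, hm1]; field_simp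
  have hgeoid : p * (p + f*ω)⁻¹ = 1 - m0*ω + f^2*ω^2 / (p*(p+f*ω)) := by
    rw [hm0def]
    field_simp
    ring
  have hgeob : f^2*ω^2/(p*(p+f*ω)) ≤ B0*ω^2 := by
    have h1 : p*p ≤ p*(p+f*ω) := by
      linarith only [mul_nonneg hp.le (mul_nonneg hf.le hω0)]
    have h2 : f^2*ω^2/(p*(p+f*ω)) ≤ f^2*ω^2/(p*p) :=
      div_le_div_of_nonneg_left (by positivity) (by positivity) h1
    calc f^2*ω^2/(p*(p+f*ω)) ≤ f^2*ω^2/(p*p) := h2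
      _ = B0*ω^2 := by rw [hB0]; ring
  have hgeo : p * (1 - f*s)⁻¹ ≤ 1 - m0*ω + B0*ω^2 := by
    rw [hfs, hgeoid]; linarith only [hgeob]
  have hq2 : B0*ω^2 ≤ B0*m1^2*lam^2 := by
    have a3 : ω ≤ m1*lam := le_trans hωhi hwle
    have a4 : ω*ω ≤ (m1*lam)*(m1*lam) :=
      mul_le_mul a3 a3 hω0 (mul_nonneg hm1p.le hl0.le)
    linarith only [mul_le_mul_of_nonneg_left a4 hB0p]
  have hmain : lam - p*lam + (B0*m1^2 + p + 1)*lam^2 ≤ m0*ω := by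
    have b1 : m0*(w - δ - 3*δ^2) ≤ m0*ω := mul_le_mul_of_nonneg_left hωlo hm0.le
    have b2 : m0*δ = p*lam - m0*C2*lam^2 := by rw [hδ]; linear_combination lam * hm0c
    have b3 : m0*w = lam - m0*B1*lam^2 := by rw [hw]; linear_combination lam * hm0m1
    have b4 : m0*C2*lam^2 = m0*B1*lam^2 + m0*(3*c^2)*lam^2 +
        (B0*m1^2 + p + 1)*lam^2 := by
      rw [hC2]
      linear_combination (B0*m1^2 + p + 1)*lam^2 * hm0m1
    have b5 : m0*(3*δ^2) ≤ m0*(3*c^2*lam^2) := by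
      apply mul_le_mul_of_nonneg_left _ hm0.le
      linarith only [hd2]
    linarith only [b1, b2, b3, b4, b5]
  have hexp : Real.exp (-lam) - 1 ≤ -lam + lam^2 := by
    have h := exp_neg_quad_upper hl0.le
    linarith only [h]
  refine ⟨hw0, hw1, hs0, hsle1, ?_⟩
  have c1 : p*(Real.exp (-lam) - 1) ≤ p*(-lam + lam^2) :=
    mul_le_mul_of_nonneg_left hexp hp.le
  have hfinal : p*(-lam + lam^2) + (1 - m0*ω + B0*ω^2) ≤ 1 - lam := by
    linarith only [hmain, hq2, sq_nonneg lam]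
  calc p*(Real.exp (-lam) - 1) + p * (1 - f*s)⁻¹
      ≤ p*(-lam + lam^2) + (1 - m0*ω + B0*ω^2) := add_le_add c1 hgeo
    _ ≤ 1 - lam := hfinal

/-- Master tail estimate: a tilted-weight bound on the probability of an event. -/
lemma tail_bound {q : ℕ → ℝ} {Z : ℝ} (hq : RegCrit q Z) (a b K y0r y1r : ℝ)
    (E' : Finset (List ℕ) → Prop)
    (hK : 0 ≤ K)
    (hy0a : y0r ≤ 1) (hy0b : 0 ≤ y0r) (hy1b : 0 ≤ y1r)
    (hcond : ∀ T : Finset (List ℕ), IsPlaneTree T → E' T →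
      1 ≤ K * Real.exp (a * ((leaves0 T).card : ℝ) + b * (t1card T : ℝ)))
    (hsum0 : Summable (fun k : ℕ =>
      mu0 q Z k * Real.exp (a * (if k = 0 then 1 else 0) + b * k) * y1r ^ k))
    (hg0 : (∑' k : ℕ,
      mu0 q Z k * Real.exp (a * (if k = 0 then 1 else 0) + b * k) * y1r ^ k) ≤ y0r)
    (hg1 : (∑' k : ℕ, mu1 q Z k * y0r ^ k) ≤ y1r) :
    (∑' T : Finset (List ℕ), if IsPlaneTree T ∧ E' T then
      ENNReal.ofReal (treeWt (mu0 q Z) (mu1 q Z) T) else 0) ≤ ENNReal.ofReal K := by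
  have hmu0 : ∀ k, 0 ≤ mu0 q Z k := RC.mu0_nonneg hq
  have hmu1 : ∀ k, 0 ≤ mu1 q Z k := RC.mu1_nonneg hq
  set μ0' : ℕ → ℝ := fun k =>
    mu0 q Z k * Real.exp (a * (if k = 0 then 1 else 0) + b * k) with hμ0'
  have hμ0'nn : ∀ k, 0 ≤ μ0' k := fun k =>
    mul_nonneg (hmu0 k) (Real.exp_nonneg _)
  have hwtnn : ∀ T, 0 ≤ treeWt (mu0 q Z) (mu1 q Z) T :=
    treeWt_nonneg hmu0 hmu1
  have hwtnn' : ∀ T, 0 ≤ treeWt μ0' (mu1 q Z) T := treeWt_nonneg hμ0'nn hmu1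
  -- pointwise comparison with the tilted weight
  have hpt : ∀ T : Finset (List ℕ),
      (if IsPlaneTree T ∧ E' T then
        ENNReal.ofReal (treeWt (mu0 q Z) (mu1 q Z) T) else 0) ≤
      (if IsPlaneTree T then
        ENNReal.ofReal (K * treeWt μ0' (mu1 q Z) T) else 0) := by
    intro T
    by_cases h : IsPlaneTree T ∧ E' T
    · rw [if_pos h, if_pos h.1]
      apply ENNReal.ofReal_le_ofReal
      have htilt : treeWt μ0' (mu1 q Z) T = treeWt (mu0 q Z) (mu1 q Z) T *
          Real.exp (a * ((leaves0 T).card : ℝ) + b * (t1card T : ℝ)) :=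
        treeWt_tilt h.1 (mu0 q Z) (mu1 q Z) a b
      have h1 := hcond T h.1 h.2
      have h2 := mul_le_mul_of_nonneg_left h1 (hwtnn T)
      rw [mul_one] at h2
      calc treeWt (mu0 q Z) (mu1 q Z) T
          ≤ treeWt (mu0 q Z) (mu1 q Z) T *
            (K * Real.exp (a * ((leaves0 T).card : ℝ) + b * (t1card T : ℝ))) := h2
        _ = K * treeWt μ0' (mu1 q Z) T := by rw [htilt]; ring
    · rw [if_neg h]
      exact zero_le
  calc (∑' T : Finset (List ℕ), if IsPlaneTree T ∧ E' T then
        ENNReal.ofReal (treeWt (mu0 q Z) (mu1 q Z) T) else 0)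
      ≤ ∑' T : Finset (List ℕ), (if IsPlaneTree T then
          ENNReal.ofReal (K * treeWt μ0' (mu1 q Z) T) else 0) :=
        ENNReal.tsum_le_tsum hpt
    _ = ENNReal.ofReal K * ∑' T : Finset (List ℕ), (if IsPlaneTree T then
          ENNReal.ofReal (treeWt μ0' (mu1 q Z) T) else 0) := by
        rw [← ENNReal.tsum_mul_left]
        apply tsum_congr
        intro T
        by_cases h : IsPlaneTree T
        · rw [if_pos h, if_pos h, ENNReal.ofReal_mul hK]
        · rw [if_neg h, if_neg h, mul_zero]
    _ ≤ ENNReal.ofReal K * ENNReal.ofReal y0r := by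
        apply mul_le_mul_right
        have heq : (fun T : Finset (List ℕ) => if IsPlaneTree T then
            ENNReal.ofReal (treeWt μ0' (mu1 q Z) T) else 0) =
            fun T : Finset (List ℕ) => if IsPlaneTree T then
              TW (fun k => ENNReal.ofReal (μ0' k))
                 (fun k => ENNReal.ofReal (mu1 q Z k)) T else 0 := by
          funext T
          by_cases h : IsPlaneTree T
          · rw [if_pos h, if_pos h, ofReal_treeWt hμ0'nn hmu1]
          · rw [if_neg h, if_neg h]
        rw [heq]
        apply TS_le _ _ _ (ENNReal.ofReal y1r)
        · -- hypothesis for g₀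
          have hpow : ∀ k : ℕ, ENNReal.ofReal (μ0' k) * (ENNReal.ofReal y1r) ^ k =
              ENNReal.ofReal (μ0' k * y1r ^ k) := by
            intro k
            rw [← ENNReal.ofReal_pow hy1b, ← ENNReal.ofReal_mul (hμ0'nn k)]
          calc (∑' k : ℕ, ENNReal.ofReal (μ0' k) * (ENNReal.ofReal y1r) ^ k)
              = ∑' k : ℕ, ENNReal.ofReal (μ0' k * y1r ^ k) := tsum_congr hpow
            _ = ENNReal.ofReal (∑' k : ℕ, μ0' k * y1r ^ k) :=
                (ENNReal.ofReal_tsum_of_nonneg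
                  (fun k => mul_nonneg (hμ0'nn k) (pow_nonneg hy1b k)) hsum0).symm
            _ ≤ ENNReal.ofReal y0r := ENNReal.ofReal_le_ofReal hg0
        · -- hypothesis for g₁
          have hsum1 : Summable (fun k : ℕ => mu1 q Z k * y0r ^ k) := by
            apply Summable.of_nonneg_of_le _ _ (RC.mu1_summable hq)
            · intro k; exact mul_nonneg (hmu1 k) (pow_nonneg hy0b k)
            · intro k
              calc mu1 q Z k * y0r ^ k ≤ mu1 q Z k * 1 :=
                    mul_le_mul_of_nonneg_left (pow_le_one₀ hy0b hy0a) (hmu1 k)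
                _ = mu1 q Z k := mul_one _
          have hpow : ∀ k : ℕ, ENNReal.ofReal (mu1 q Z k) * (ENNReal.ofReal y0r) ^ k =
              ENNReal.ofReal (mu1 q Z k * y0r ^ k) := by
            intro k
            rw [← ENNReal.ofReal_pow hy0b, ← ENNReal.ofReal_mul (hmu1 k)]
          calc (∑' k : ℕ, ENNReal.ofReal (mu1 q Z k) * (ENNReal.ofReal y0r) ^ k)
              = ∑' k : ℕ, ENNReal.ofReal (mu1 q Z k * y0r ^ k) := tsum_congr hpow
            _ = ENNReal.ofReal (∑' k : ℕ, mu1 q Z k * y0r ^ k) :=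
                (ENNReal.ofReal_tsum_of_nonneg
                  (fun k => mul_nonneg (hmu1 k) (pow_nonneg hy0b k)) hsum1).symm
            _ ≤ ENNReal.ofReal y1r := ENNReal.ofReal_le_ofReal hg1
    _ ≤ ENNReal.ofReal K * 1 :=
        mul_le_mul_right (ENNReal.ofReal_le_one.mpr hy0a) _
    _ = ENNReal.ofReal K := mul_one _

lemma ite_iff_congr {α : Sort*} {c d : Prop} {ic : Decidable c} {id' : Decidable d}
    (h : c ↔ d) (x y : α) : (@ite α c ic x y) = @ite α d id' x y := by
  cases ic with
  | isTrue hc =>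
    cases id' with
    | isTrue hd => rfl
    | isFalse hd => exact absurd (h.mp hc) hd
  | isFalse hc =>
    cases id' with
    | isTrue hd => exact absurd (h.mpr hd) hc
    | isFalse hd => rfl

set_option maxHeartbeats 2000000 in
/-- Lemma `feuilles`:
`P_μ(|#∂₀T - m₁ μ₀(0) n| > n^{3/4}, #T¹ = n) ≤ exp(-n^{β₀})` for large `n`. -/
theorem stmt11 (q : ℕ → ℝ) (Z : ℝ) (hq : RegCrit q Z) :
    ∃ β₀ : ℝ, 0 < β₀ ∧ ∀ᶠ n : ℕ in atTop,
      tP (mu0 q Z) (mu1 q Z)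
          (fun T => |((leaves0 T).card : ℝ) - meanMu1 q Z * mu0 q Z 0 * n| >
              (n : ℝ) ^ ((3 : ℝ) / 4) ∧
            t1card T = n) ≤
        Real.exp (-(n : ℝ) ^ β₀) := by
  refine ⟨(1:ℝ)/4, by norm_num, ?_⟩
  -- basic constants
  have hppos : 0 < Z⁻¹ := inv_pos.mpr hq.Zpos
  have hfpos : 0 < fq q Z := RC.f_pos hq
  have hpf0 : Z⁻¹ + fq q Z = 1 := by
    have h := RC.f_eq hq
    linarith only [h]
  have hflt1 : fq q Z < 1 := RC.f_lt_one hq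
  set pp := Z⁻¹ with hppdef
  set ff := fq q Z with hffdef
  have hm1pos : 0 < meanMu1 q Z := RC.mean_pos hq
  set m1v := meanMu1 q Z with hm1def
  have hm1eq : m1v = pp / ff := by
    rw [hm1def, RC.mean_eq hq, div_eq_mul_inv, hppdef, hffdef]
  have hmu00 : mu0 q Z 0 = pp := by rw [mu0, pow_zero, mul_one, hppdef]
  set cc := m1v * mu0 q Z 0 with hccdef
  have hcc : cc = pp * m1v := by rw [hccdef, hmu00]; ring
  have hccpos : 0 < cc := by rw [hcc]; exact mul_pos hppos hm1pos
  set B1 := (∑' k : ℕ, (k : ℝ) ^ 2 * mu1 q Z k) / 2 with hB1def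
  have hB1 : 0 ≤ B1 := by
    rw [hB1def]
    apply div_nonneg _ (by norm_num)
    exact tsum_nonneg (fun k => mul_nonneg (sq_nonneg _) (RC.mu1_nonneg hq k))
  set B0v := ff ^ 2 / pp ^ 2 with hB0def
  have hB0nn : 0 ≤ B0v := by rw [hB0def]; positivity
  set C1v := B1 + ((cc+1)^2 + (cc+1)*m1v) + (3*pp + B0v*(m1v+cc+1)^2 + 1) * m1v with hC1def
  set C2v := B1 + 3*cc^2 + (B0v*m1v^2 + pp + 1) * m1v with hC2def
  have hsq1 : 0 ≤ (m1v+cc+1)^2 := sq_nonneg _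
  have hC1nn : 0 ≤ C1v := by
    rw [hC1def]
    have h1 : 0 ≤ (cc+1)^2 := sq_nonneg _
    have h2 : 0 ≤ (cc+1)*m1v := mul_nonneg (by linarith only [hccpos]) hm1pos.le
    have h3 : 0 ≤ (3*pp + B0v*(m1v+cc+1)^2 + 1) * m1v :=
      mul_nonneg (by linarith only [mul_nonneg hB0nn hsq1, hppos]) hm1pos.le
    linarith
  have hC2nn : 0 ≤ C2v := by
    rw [hC2def]
    have h1 : 0 ≤ 3*cc^2 := by positivity
    have h2 : 0 ≤ (B0v*m1v^2 + pp + 1) * m1v :=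
      mul_nonneg (by linarith only [mul_nonneg hB0nn (sq_nonneg m1v), hppos]) hm1pos.le
    linarith
  -- the small constant ε
  set ε := min (min (min (1/(m1v+1)) (m1v/(B1+1))) (min (1/(cc+1)) (1/(C1v+1))))
    (min (min (cc/(C2v+1)) ((m1v*ff)/(B1+3*cc^2+1))) (min (1/(2*C1v+1)) (1/(2*C2v+1))))
    with hεdef
  have hεpos : 0 < ε := by
    rw [hεdef]
    apply lt_min
    · apply lt_min
      · exact lt_min (by positivity) (div_pos hm1pos (by linarith only [hB1]))
      · refine lt_min (by positivity) (div_pos one_pos (by linarith only [hC1nn]))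
    · apply lt_min
      · refine lt_min (div_pos hccpos (by linarith only [hC2nn]))
          (div_pos (mul_pos hm1pos hfpos) (by linarith only [hB1, sq_nonneg cc]))
      · exact lt_min (div_pos one_pos (by linarith only [hC1nn])) (div_pos one_pos (by linarith only [hC2nn]))
  have hε1 : ε ≤ 1/(m1v+1) :=
    (min_le_left _ _).trans ((min_le_left _ _).trans (min_le_left _ _))
  have hε2 : ε ≤ m1v/(B1+1) :=
    (min_le_left _ _).trans ((min_le_left _ _).trans (min_le_right _ _))
  have hε3 : ε ≤ 1/(cc+1) :=
    (min_le_left _ _).trans ((min_le_right _ _).trans (min_le_left _ _))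
  have hε4 : ε ≤ 1/(C1v+1) :=
    (min_le_left _ _).trans ((min_le_right _ _).trans (min_le_right _ _))
  have hε5 : ε ≤ cc/(C2v+1) :=
    (min_le_right _ _).trans ((min_le_left _ _).trans (min_le_left _ _))
  have hε6 : ε ≤ (m1v*ff)/(B1+3*cc^2+1) :=
    (min_le_right _ _).trans ((min_le_left _ _).trans (min_le_right _ _))
  have hε7 : ε ≤ 1/(2*C1v+1) :=
    (min_le_right _ _).trans ((min_le_right _ _).trans (min_le_left _ _))
  have hε8 : ε ≤ 1/(2*C2v+1) :=
    (min_le_right _ _).trans ((min_le_right _ _).trans (min_le_right _ _))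
  clear_value pp ff m1v cc B1 B0v C1v C2v ε
  have hC1ε : C1v * ε ≤ 1/2 := by
    have h := (le_div_iff₀ (by linarith only [hC1nn] : (0:ℝ) < 2*C1v+1)).mp hε7
    linarith only [h, hεpos]
  have hC2ε : C2v * ε ≤ 1/2 := by
    have h := (le_div_iff₀ (by linarith only [hC2nn] : (0:ℝ) < 2*C2v+1)).mp hε8
    linarith only [h, hεpos]
  -- the eventual bound
  rw [Filter.eventually_atTop]
  refine ⟨max 1 (⌈(4/ε)^(4:ℕ)⌉₊ + 1), fun n hn => ?_⟩
  have hn1 : 1 ≤ n := le_trans (le_max_left _ _) hn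
  have hnc : ⌈(4/ε)^(4:ℕ)⌉₊ + 1 ≤ n := le_trans (le_max_right _ _) hn
  have hn1R : (1:ℝ) ≤ (n:ℝ) := by exact_mod_cast hn1
  have hn0R : (0:ℝ) < (n:ℝ) := by linarith only [hn1R]
  have h4ε : (0:ℝ) < 4/ε := by positivity
  have hy4 : 4/ε ≤ (n:ℝ)^((1:ℝ)/4) := by
    have h1 : ((4/ε)^(4:ℕ) : ℝ) ≤ (n:ℝ) := by
      have h2 := Nat.le_ceil (((4/ε)^(4:ℕ) : ℝ))
      have h3 : ((⌈((4/ε)^(4:ℕ) : ℝ)⌉₊ : ℕ) : ℝ) + 1 ≤ (n:ℝ) := by exact_mod_cast hnc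
      linarith only [h2, h3]
    have h5 : (((4/ε)^(4:ℕ) : ℝ))^((1:ℝ)/4) ≤ (n:ℝ)^((1:ℝ)/4) :=
      Real.rpow_le_rpow (by positivity) h1 (by norm_num)
    have h6 : (((4/ε)^(4:ℕ) : ℝ))^((1:ℝ)/4) = 4/ε := by
      rw [← Real.rpow_natCast (4/ε) 4, ← Real.rpow_mul h4ε.le]
      norm_num
    rw [h6] at h5
    exact h5
  have hy1 : 1 ≤ (n:ℝ)^((1:ℝ)/4) := by
    calc (1:ℝ) = (1:ℝ)^((1:ℝ)/4) := (Real.one_rpow _).symm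
      _ ≤ (n:ℝ)^((1:ℝ)/4) := Real.rpow_le_rpow zero_le_one hn1R (by norm_num)
  set lam := ε * (n:ℝ)^(-((1:ℝ)/4)) with hlamdef
  have hrp : 0 < (n:ℝ)^(-((1:ℝ)/4)) := Real.rpow_pos_of_pos hn0R _
  have hlam0 : 0 < lam := mul_pos hεpos hrp
  have hrple1 : (n:ℝ)^(-((1:ℝ)/4)) ≤ 1 :=
    Real.rpow_le_one_of_one_le_of_nonpos hn1R (by norm_num)
  have hlamε : lam ≤ ε := by
    calc lam ≤ ε * 1 := mul_le_mul_of_nonneg_left hrple1 hεpos.le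
      _ = ε := mul_one _
  clear_value lam
  have hmul : ∀ {Xv Yv : ℝ}, 0 < Xv → ε ≤ Yv / Xv → lam * Xv ≤ Yv := by
    intro Xv Yv hX hY
    have h1 : lam ≤ Yv / Xv := le_trans hlamε hY
    calc lam * Xv ≤ (Yv/Xv) * Xv := mul_le_mul_of_nonneg_right h1 hX.le
      _ = Yv := div_mul_cancel₀ _ hX.ne'
  have hh1 : lam*(m1v+1) ≤ 1 := hmul (by linarith only [hm1pos]) hε1
  have hh2 : lam*(B1+1) ≤ m1v := hmul (by linarith only [hB1]) hε2
  have hh3 : lam*(cc+1) ≤ 1 := hmul (by linarith only [hccpos]) hε3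
  have hh4' : lam*(C1v+1) ≤ 1 := hmul (by linarith only [hC1nn]) hε4
  have hh4 : lam*C1v ≤ 1 := by linarith only [hh4', hlam0]
  have hh5 : lam*(C2v+1) ≤ cc := hmul (by linarith only [hC2nn]) hε5
  have hh6 : lam*(B1+3*cc^2+1) ≤ m1v*ff :=
    hmul (by linarith only [hB1, sq_nonneg cc]) hε6
  have hlam1le : lam ≤ 1 := by linarith only [hh1, mul_pos hlam0 hm1pos]
  -- the calculus lemmas
  set w := m1v*lam - B1*lam^2 with hwdef
  set δ := cc*lam + C1v*lam^2 with hδdef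
  set δ' := cc*lam - C2v*lam^2 with hδ'def
  set sU := Real.exp (-δ) * (1 - w) with hsUdef
  set sL := Real.exp δ' * (1 - w) with hsLdef
  clear_value w δ δ' sU sL
  obtain ⟨hw0, hw1, hsU0, hsU1, hineqU⟩ :=
    calc_upper pp ff m1v cc B0v B1 C1v lam w δ sU hppos hfpos hpf0 hB1
      hm1eq hcc hB0def hC1def hwdef hδdef hsUdef hlam0 hh1 hh2 hh3 hh4
  obtain ⟨-, -, hsL0, hsL1, hineqL⟩ :=
    calc_lower pp ff m1v cc B0v B1 C2v lam w δ' sL hppos hfpos hpf0 hB1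
      hm1eq hcc hB0def hC2def hwdef hδ'def hsLdef hlam0 hh1 hh2 hh3 hh5 hh6
  have hfsU : ff * sU < 1 := by
    have h1 : ff*sU ≤ ff*1 := mul_le_mul_of_nonneg_left hsU1 hfpos.le
    rw [mul_one] at h1
    linarith only [h1, hflt1]
  have hfsL : ff * sL < 1 := by
    have h1 : ff*sL ≤ ff*1 := mul_le_mul_of_nonneg_left hsL1 hfpos.le
    rw [mul_one] at h1
    linarith only [h1, hflt1]
  -- tilted series for the upper tail
  have hfunU : (fun k : ℕ => mu0 q Z k *
      Real.exp (lam * (if k = 0 then 1 else 0) + (-δ) * k) * (1-w) ^ k) =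
      fun k : ℕ => mu0 q Z k * Real.exp (lam * (if k = 0 then 1 else 0)) * sU ^ k := by
    funext k
    rw [hsUdef, Real.exp_add, mul_pow, mul_comm (-δ) (k:ℝ), Real.exp_nat_mul]
    ring
  obtain ⟨hsumU, hvalU⟩ := RC.mu0_tilt_sum hq lam hsU0 (by rw [← hffdef]; exact hfsU)
  have hsumU' : Summable (fun k : ℕ => mu0 q Z k *
      Real.exp (lam * (if k = 0 then 1 else 0) + (-δ) * k) * (1-w) ^ k) := by
    rw [hfunU]; exact hsumU
  have hg0U : (∑' k : ℕ, mu0 q Z k *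
      Real.exp (lam * (if k = 0 then 1 else 0) + (-δ) * k) * (1-w) ^ k) ≤ 1 - lam := by
    rw [hfunU, hvalU, ← hppdef, ← hffdef]
    linarith only [hineqU]
  -- tilted series for the lower tail
  have hfunL : (fun k : ℕ => mu0 q Z k *
      Real.exp ((-lam) * (if k = 0 then 1 else 0) + δ' * k) * (1-w) ^ k) =
      fun k : ℕ => mu0 q Z k * Real.exp ((-lam) * (if k = 0 then 1 else 0)) * sL ^ k := by
    funext k
    rw [hsLdef, Real.exp_add, mul_pow, mul_comm δ' (k:ℝ), Real.exp_nat_mul]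
    ring
  obtain ⟨hsumL, hvalL⟩ := RC.mu0_tilt_sum hq (-lam) hsL0 (by rw [← hffdef]; exact hfsL)
  have hsumL' : Summable (fun k : ℕ => mu0 q Z k *
      Real.exp ((-lam) * (if k = 0 then 1 else 0) + δ' * k) * (1-w) ^ k) := by
    rw [hfunL]; exact hsumL
  have hg0L : (∑' k : ℕ, mu0 q Z k *
      Real.exp ((-lam) * (if k = 0 then 1 else 0) + δ' * k) * (1-w) ^ k) ≤ 1 - lam := by
    rw [hfunL, hvalL, ← hppdef, ← hffdef]
    linarith only [hineqL]
  -- series for μ₁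
  have hg1 : (∑' k : ℕ, mu1 q Z k * (1-lam) ^ k) ≤ 1 - w := by
    have h := RC.mu1_gen_bound hq hlam0.le hlam1le
    rw [← hm1def] at h
    rw [hwdef, hB1def]
    linarith only [h]
  set t := (n:ℝ)^((3:ℝ)/4) with htdef
  set Kp := Real.exp (-(lam*(cc*(n:ℝ) + t)) + δ*(n:ℝ)) with hKpdef
  set Km := Real.exp (lam*(cc*(n:ℝ) - t) - δ'*(n:ℝ)) with hKmdef
  clear_value t Kp Km
  have hKp0 : 0 ≤ Kp := by rw [hKpdef]; exact (Real.exp_pos _).le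
  have hKm0 : 0 ≤ Km := by rw [hKmdef]; exact (Real.exp_pos _).le
  -- conditions
  have hcondU : ∀ T : Finset (List ℕ), IsPlaneTree T →
      (cc*(n:ℝ) + t < ((leaves0 T).card : ℝ) ∧ t1card T = n) →
      1 ≤ Kp * Real.exp (lam * ((leaves0 T).card : ℝ) + (-δ) * (t1card T : ℝ)) := by
    intro T _ hE
    obtain ⟨hA, hN⟩ := hE
    have hNr : (t1card T : ℝ) = (n : ℝ) := by exact_mod_cast hN
    rw [hKpdef, ← Real.exp_add]
    apply Real.one_le_exp
    rw [hNr]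
    have heq : -(lam*(cc*(n:ℝ) + t)) + δ*(n:ℝ) +
        (lam * ((leaves0 T).card : ℝ) + (-δ)*(n:ℝ)) =
        lam * (((leaves0 T).card : ℝ) - (cc*(n:ℝ) + t)) := by ring
    rw [heq]
    exact mul_nonneg hlam0.le (by linarith only [hA])
  have hcondL : ∀ T : Finset (List ℕ), IsPlaneTree T →
      (((leaves0 T).card : ℝ) < cc*(n:ℝ) - t ∧ t1card T = n) →
      1 ≤ Km * Real.exp ((-lam) * ((leaves0 T).card : ℝ) + δ' * (t1card T : ℝ)) := by
    intro T _ hE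
    obtain ⟨hA, hN⟩ := hE
    have hNr : (t1card T : ℝ) = (n : ℝ) := by exact_mod_cast hN
    rw [hKmdef, ← Real.exp_add]
    apply Real.one_le_exp
    rw [hNr]
    have heq : lam*(cc*(n:ℝ) - t) - δ'*(n:ℝ) +
        ((-lam) * ((leaves0 T).card : ℝ) + δ'*(n:ℝ)) =
        lam * ((cc*(n:ℝ) - t) - ((leaves0 T).card : ℝ)) := by ring
    rw [heq]
    exact mul_nonneg hlam0.le (by linarith only [hA])
  -- tail bounds
  have htailU := tail_bound hq lam (-δ) Kp (1-lam) (1-w)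
    (fun T => cc*(n:ℝ) + t < ((leaves0 T).card : ℝ) ∧ t1card T = n)
    hKp0 (by linarith only [hlam0]) (by linarith only [hlam1le]) (by linarith only [hw1]) hcondU hsumU' hg0U hg1
  have htailL := tail_bound hq (-lam) δ' Km (1-lam) (1-w)
    (fun T => ((leaves0 T).card : ℝ) < cc*(n:ℝ) - t ∧ t1card T = n)
    hKm0 (by linarith only [hlam0]) (by linarith only [hlam1le]) (by linarith only [hw1]) hcondL hsumL' hg0L hg1
  have htailU' : (∑' T : Finset (List ℕ), if IsPlaneTree T ∧
      (cc*(n:ℝ) + t < ((leaves0 T).card : ℝ) ∧ t1card T = n) then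
      ENNReal.ofReal (treeWt (mu0 q Z) (mu1 q Z) T) else 0) ≤ ENNReal.ofReal Kp := by
    refine le_trans (le_of_eq (tsum_congr fun T => ?_)) htailU
    exact ite_iff_congr Iff.rfl _ _
  have htailL' : (∑' T : Finset (List ℕ), if IsPlaneTree T ∧
      (((leaves0 T).card : ℝ) < cc*(n:ℝ) - t ∧ t1card T = n) then
      ENNReal.ofReal (treeWt (mu0 q Z) (mu1 q Z) T) else 0) ≤ ENNReal.ofReal Km := by
    refine le_trans (le_of_eq (tsum_congr fun T => ?_)) htailL
    exact ite_iff_congr Iff.rfl _ _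
  -- splitting the event
  have hsplit : (∑' T : Finset (List ℕ), if IsPlaneTree T ∧
        (|((leaves0 T).card : ℝ) - cc*(n:ℝ)| > t ∧ t1card T = n) then
        ENNReal.ofReal (treeWt (mu0 q Z) (mu1 q Z) T) else 0) ≤
      (∑' T : Finset (List ℕ), if IsPlaneTree T ∧
        (cc*(n:ℝ) + t < ((leaves0 T).card : ℝ) ∧ t1card T = n) then
        ENNReal.ofReal (treeWt (mu0 q Z) (mu1 q Z) T) else 0) +
      (∑' T : Finset (List ℕ), if IsPlaneTree T ∧
        (((leaves0 T).card : ℝ) < cc*(n:ℝ) - t ∧ t1card T = n) then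
        ENNReal.ofReal (treeWt (mu0 q Z) (mu1 q Z) T) else 0) := by
    rw [← ENNReal.tsum_add]
    apply ENNReal.tsum_le_tsum
    intro T
    by_cases h : IsPlaneTree T ∧
        (|((leaves0 T).card : ℝ) - cc*(n:ℝ)| > t ∧ t1card T = n)
    · rw [if_pos h]
      rcases lt_abs.mp h.2.1 with h1 | h1
      · rw [if_pos (show IsPlaneTree T ∧
            (cc*(n:ℝ) + t < ((leaves0 T).card : ℝ) ∧ t1card T = n) from
            ⟨h.1, by linarith only [h1], h.2.2⟩)]
        exact le_self_add
      · rw [if_pos (show IsPlaneTree T ∧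
            (((leaves0 T).card : ℝ) < cc*(n:ℝ) - t ∧ t1card T = n) from
            ⟨h.1, by linarith only [h1], h.2.2⟩)]
        exact le_add_self
    · rw [if_neg h]
      exact zero_le
  -- the full ENNReal bound
  have hENN : (∑' T : Finset (List ℕ), ENNReal.ofReal (if IsPlaneTree T ∧
        (|((leaves0 T).card : ℝ) - cc*(n:ℝ)| > t ∧ t1card T = n) then
        treeWt (mu0 q Z) (mu1 q Z) T else 0)) ≤ ENNReal.ofReal (Kp + Km) := by
    have heq : ∀ T : Finset (List ℕ), ENNReal.ofReal (if IsPlaneTree T ∧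
        (|((leaves0 T).card : ℝ) - cc*(n:ℝ)| > t ∧ t1card T = n) then
        treeWt (mu0 q Z) (mu1 q Z) T else 0) = (if IsPlaneTree T ∧
        (|((leaves0 T).card : ℝ) - cc*(n:ℝ)| > t ∧ t1card T = n) then
        ENNReal.ofReal (treeWt (mu0 q Z) (mu1 q Z) T) else 0) := by
      intro T
      rw [apply_ite ENNReal.ofReal, ENNReal.ofReal_zero]
    calc (∑' T : Finset (List ℕ), ENNReal.ofReal (if IsPlaneTree T ∧
          (|((leaves0 T).card : ℝ) - cc*(n:ℝ)| > t ∧ t1card T = n) then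
          treeWt (mu0 q Z) (mu1 q Z) T else 0))
        = ∑' T : Finset (List ℕ), (if IsPlaneTree T ∧
          (|((leaves0 T).card : ℝ) - cc*(n:ℝ)| > t ∧ t1card T = n) then
          ENNReal.ofReal (treeWt (mu0 q Z) (mu1 q Z) T) else 0) := tsum_congr heq
      _ ≤ _ + _ := hsplit
      _ ≤ ENNReal.ofReal Kp + ENNReal.ofReal Km := add_le_add htailU' htailL'
      _ = ENNReal.ofReal (Kp + Km) := (ENNReal.ofReal_add hKp0 hKm0).symm
  have hreal : tP (mu0 q Z) (mu1 q Z)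
      (fun T => |((leaves0 T).card : ℝ) - cc * n| > t ∧ t1card T = n) ≤ Kp + Km := by
    unfold tP
    refine realify (fun T => ?_) (by linarith only [hKp0, hKm0]) ?_
    · by_cases h : IsPlaneTree T ∧
          (|((leaves0 T).card : ℝ) - cc*(n:ℝ)| > t ∧ t1card T = n)
      · rw [if_pos h]
        exact treeWt_nonneg (RC.mu0_nonneg hq) (RC.mu1_nonneg hq) T
      · rw [if_neg h]
    · refine le_trans (le_of_eq (tsum_congr fun T => ?_)) hENN
      exact congrArg ENNReal.ofReal (ite_iff_congr Iff.rfl _ _)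
  -- final real computation
  have hlamt : lam * t = ε * (n:ℝ)^((1:ℝ)/2) := by
    rw [hlamdef, htdef, mul_assoc, ← Real.rpow_add hn0R]
    norm_num
  have e1 : (n:ℝ)^(-((1:ℝ)/4)) * (n:ℝ)^(-((1:ℝ)/4)) = (n:ℝ)^(-((1:ℝ)/2)) := by
    rw [← Real.rpow_add hn0R]
    norm_num
  have e2 : (n:ℝ)^(-((1:ℝ)/2)) * (n:ℝ)^((1:ℝ)) = (n:ℝ)^((1:ℝ)/2) := by
    rw [← Real.rpow_add hn0R]
    norm_num
  have e3 : (n:ℝ)^((1:ℝ)) = (n:ℝ) := Real.rpow_one _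
  have hlam2n : lam^2 * (n:ℝ) = ε^2 * (n:ℝ)^((1:ℝ)/2) := by
    calc lam^2 * (n:ℝ)
        = ε^2 * (((n:ℝ)^(-((1:ℝ)/4)) * (n:ℝ)^(-((1:ℝ)/4))) * (n:ℝ)) := by
          rw [hlamdef]; ring
      _ = ε^2 * ((n:ℝ)^(-((1:ℝ)/2)) * (n:ℝ)) := by rw [e1]
      _ = ε^2 * ((n:ℝ)^(-((1:ℝ)/2)) * (n:ℝ)^((1:ℝ))) := by rw [e3]
      _ = ε^2 * (n:ℝ)^((1:ℝ)/2) := by rw [e2]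
  have hsqnn : 0 ≤ (n:ℝ)^((1:ℝ)/2) := (Real.rpow_pos_of_pos hn0R _).le
  have hKpb : Kp ≤ Real.exp (-(ε/2) * (n:ℝ)^((1:ℝ)/2)) := by
    rw [hKpdef]
    apply Real.exp_le_exp.mpr
    have hexpU : -(lam*(cc*(n:ℝ)+t)) + δ*(n:ℝ) = -(lam*t) + C1v*(lam^2*(n:ℝ)) := by
      rw [hδdef]; ring
    rw [hexpU, hlamt, hlam2n]
    linarith only [mul_le_mul_of_nonneg_right hC1ε (mul_nonneg hεpos.le hsqnn),
      mul_nonneg hεpos.le hsqnn]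
  have hKmb : Km ≤ Real.exp (-(ε/2) * (n:ℝ)^((1:ℝ)/2)) := by
    rw [hKmdef]
    apply Real.exp_le_exp.mpr
    have hexpL : lam*(cc*(n:ℝ)-t) - δ'*(n:ℝ) = -(lam*t) + C2v*(lam^2*(n:ℝ)) := by
      rw [hδ'def]; ring
    rw [hexpL, hlamt, hlam2n]
    linarith only [mul_le_mul_of_nonneg_right hC2ε (mul_nonneg hεpos.le hsqnn),
      mul_nonneg hεpos.le hsqnn]
  have hlog2 : Real.log 2 ≤ 1 := by
    have h := Real.log_le_sub_one_of_pos (by norm_num : (0:ℝ) < 2)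
    linarith only [h]
  have hq4 : (n:ℝ)^((1:ℝ)/2) = ((n:ℝ)^((1:ℝ)/4))^(2:ℕ) := by
    rw [← Real.rpow_natCast ((n:ℝ)^((1:ℝ)/4)) 2, ← Real.rpow_mul hn0R.le]
    norm_num
  have hfinalreal : Kp + Km ≤ Real.exp (-(n:ℝ)^((1:ℝ)/4)) := by
    have h2 : Kp + Km ≤ 2 * Real.exp (-(ε/2) * (n:ℝ)^((1:ℝ)/2)) := by
      linarith only [hKpb, hKmb]
    have h3 : (2:ℝ) * Real.exp (-(ε/2) * (n:ℝ)^((1:ℝ)/2)) =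
        Real.exp (Real.log 2 + -(ε/2) * (n:ℝ)^((1:ℝ)/2)) := by
      rw [Real.exp_add, Real.exp_log (by norm_num : (0:ℝ) < 2)]
    rw [h3] at h2
    refine le_trans h2 (Real.exp_le_exp.mpr ?_)
    rw [hq4]
    have h44 : ε * (4/ε) = 4 := by field_simp
    have hεy : 4 ≤ ε * (n:ℝ)^((1:ℝ)/4) := by
      calc (4:ℝ) = ε*(4/ε) := h44.symm
        _ ≤ ε*(n:ℝ)^((1:ℝ)/4) := mul_le_mul_of_nonneg_left hy4 hεpos.le
    have h4y : 4*(n:ℝ)^((1:ℝ)/4) ≤ (ε*(n:ℝ)^((1:ℝ)/4))*(n:ℝ)^((1:ℝ)/4) :=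
      mul_le_mul_of_nonneg_right hεy (by linarith only [hy1])
    linarith only [h4y, hy1, hlog2]
  exact le_trans hreal hfinalreal



end PaperWeill
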